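/- arXiv:math/0110181 — 7 statements merged into one kernel-verified Lean document; each statement's English description precedes it below -/
import Mathlib

section
/- Fix integers k ≥ 1 and m ≥ 0. For every n ≥ 1, the number of compositions of n in which the part size k has multiplicity exactly m equals the coefficient of z^n in the formal power series z^{km}(1−z)^{m+1} · (1 − 2z + z^k(1−z))^{-(m+1)} over ℚ (the denominator has constant term 1, hence is invertible in ℚ[[z]]). -/
open PowerSeries Finset

noncomputable section CompositionCountAux

/-- The number of compositions of `n` in which `k` has multiplicity `m`. -/
def cnt (k m n : ℕ) : ℕ := Nat.card {κ : Composition n // κ.blocks.count k = m}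

lemma comp_zero_blocks (κ : Composition 0) : κ.blocks = [] := by
  refine List.eq_nil_iff_forall_not_mem.2 fun a ha => ?_
  have h1 := κ.blocks_pos ha
  have h2 : a ≤ κ.blocks.sum := List.single_le_sum (fun x _ => Nat.zero_le x) a ha
  rw [κ.blocks_sum] at h2
  omega

lemma cnt_zero (k m : ℕ) : cnt k m 0 = if m = 0 then 1 else 0 := by
  rcases Nat.eq_zero_or_pos m with hm | hm
  · subst hm
    rw [if_pos rfl, cnt, Nat.card_eq_one_iff_unique]
    constructor
    · constructor
      intro a b
      ext1; ext1
      rw [comp_zero_blocks a.1, comp_zero_blocks b.1]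
    · exact ⟨⟨⟨[], by simp, by simp⟩, by simp⟩⟩
  · rw [if_neg (by omega), cnt, Nat.card_eq_zero]
    left
    constructor
    intro ⟨κ, hκ⟩
    rw [comp_zero_blocks κ] at hκ
    simp at hκ
    omega

def fiber (k m n j : ℕ) : Type :=
  {κ : Composition j // κ.blocks.count k + (if n - j = k then 1 else 0) = m}

lemma comp_blocks_ne_nil {n : ℕ} (hn : 0 < n) (κ : Composition n) : κ.blocks ≠ [] := by
  intro h
  have := κ.blocks_sum
  rw [h] at this
  simp at this
  omega

def fwd (k m n : ℕ) (hn : 0 < n) (s : {κ : Composition n // κ.blocks.count k = m}) :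
    Σ j : Fin n, fiber k m n j.val :=
  ⟨⟨s.1.blocks.tail.sum, by
      have hne := comp_blocks_ne_nil hn s.1
      rcases List.exists_cons_of_ne_nil hne with ⟨a, t, ht⟩
      have ha : 0 < a := s.1.blocks_pos (ht ▸ (List.mem_cons_self (a := a) (l := t)))
      have hs := s.1.blocks_sum
      rw [ht] at hs ⊢
      simp only [List.sum_cons] at hs
      simp only [List.tail_cons]
      omega⟩,
   ⟨⟨s.1.blocks.tail, fun hi => s.1.blocks_pos (List.mem_of_mem_tail hi), rfl⟩, by
      have hne := comp_blocks_ne_nil hn s.1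
      rcases List.exists_cons_of_ne_nil hne with ⟨a, t, ht⟩
      have ha : 0 < a := s.1.blocks_pos (ht ▸ (List.mem_cons_self (a := a) (l := t)))
      have hs := s.1.blocks_sum
      have hκ := s.2
      show List.count k s.1.blocks.tail + (if n - s.1.blocks.tail.sum = k then 1 else 0) = m
      rw [ht, List.tail_cons]
      rw [ht, List.sum_cons] at hs
      have hna : n - t.sum = a := by omega
      rw [hna]
      rw [ht, List.count_cons] at hκ
      rcases eq_or_ne a k with h | h <;> simp [h] at hκ ⊢ <;> omega⟩⟩

def bwd (k m n : ℕ) (s : Σ j : Fin n, fiber k m n j.val) :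
    {κ : Composition n // κ.blocks.count k = m} :=
  ⟨⟨(n - s.1.val) :: s.2.1.blocks,
    by
      intro i hi
      rcases List.mem_cons.1 hi with h | h
      · subst h; have := s.1.isLt; omega
      · exact s.2.1.blocks_pos h,
    by
      have h1 := s.2.1.blocks_sum
      have h2 := s.1.isLt
      simp only [List.sum_cons, h1]
      omega⟩,
   by
      have hp := s.2.2
      simp only [List.count_cons, beq_iff_eq]
      rcases eq_or_ne (n - s.1.val) k with h | h <;> simp [h] at hp ⊢ <;> omega⟩

lemma fiber_heq {k m n j j' : ℕ} (h : j = j') (x : fiber k m n j) (y : fiber k m n j')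
    (hb : x.1.blocks = y.1.blocks) : HEq x y := by
  subst h
  exact heq_of_eq (Subtype.ext (Composition.ext hb))

def splitEquiv (k m n : ℕ) (hn : 0 < n) :
    {κ : Composition n // κ.blocks.count k = m} ≃ Σ j : Fin n, fiber k m n j.val where
  toFun := fwd k m n hn
  invFun := bwd k m n
  left_inv := by
    intro s
    have hne := comp_blocks_ne_nil hn s.1
    ext1
    ext1
    show (n - s.1.blocks.tail.sum) :: s.1.blocks.tail = s.1.blocks
    rcases List.exists_cons_of_ne_nil hne with ⟨a, t, ht⟩
    have ha : 0 < a := s.1.blocks_pos (ht ▸ (List.mem_cons_self (a := a) (l := t)))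
    have hs := s.1.blocks_sum
    rw [ht] at hs ⊢
    simp only [List.sum_cons] at hs
    simp only [List.tail_cons]
    congr 1
    omega
  right_inv := by
    intro s
    obtain ⟨⟨j, hj⟩, x⟩ := s
    have hsum : x.1.blocks.sum = j := x.1.blocks_sum
    refine Sigma.ext ?_ ?_
    · apply Fin.ext
      show ((n - j) :: x.1.blocks).tail.sum = j
      simpa using hsum
    · exact fiber_heq (by show ((n - j) :: x.1.blocks).tail.sum = j; simpa using hsum) _ x rfl


instance (k m n j : ℕ) : Fintype (fiber k m n j) := by
  unfold fiber; infer_instance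
lemma card_fiber (k m n j : ℕ) :
    Nat.card (fiber k m n j) =
      if n - j = k then (if m = 0 then 0 else cnt k (m - 1) j) else cnt k m j := by
  rcases eq_or_ne (n - j) k with h | h
  · rw [if_pos h]
    rcases Nat.eq_zero_or_pos m with hm | hm
    · subst hm
      rw [if_pos rfl, Nat.card_eq_zero]
      left
      constructor
      intro x
      have := x.2
      simp [h] at this
    · rw [if_neg (by omega), cnt]
      apply Nat.card_congr
      apply Equiv.subtypeEquivRight
      intro κ
      simp [h]
      omega
  · rw [if_neg h, cnt]
    apply Nat.card_congr
    apply Equiv.subtypeEquivRight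
    intro κ
    simp [h]

lemma cnt_rec (k m n : ℕ) (hn : 0 < n) :
    cnt k m n = ∑ j ∈ Finset.range n,
      (if n - j = k then (if m = 0 then 0 else cnt k (m - 1) j) else cnt k m j) := by
  rw [cnt, Nat.card_congr (splitEquiv k m n hn), Nat.card_eq_fintype_card, Fintype.card_sigma,
    Fin.sum_univ_eq_sum_range (fun j => Fintype.card (fiber k m n j))]
  exact Finset.sum_congr rfl fun j _ => by rw [← Nat.card_eq_fintype_card, card_fiber]

def Cser (k m : ℕ) : PowerSeries ℚ := PowerSeries.mk fun n => (cnt k m n : ℚ)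
def Sser (k : ℕ) : PowerSeries ℚ := PowerSeries.mk fun j => if 1 ≤ j ∧ j ≠ k then 1 else 0

lemma key (k m : ℕ) (hk : 1 ≤ k) :
    Cser k m * (1 - Sser k) = if m = 0 then 1 else X ^ k * Cser k (m - 1) := by
  ext n
  have hCS : (coeff n) (Cser k m * Sser k) =
      ∑ j ∈ range n, (if n - j = k then 0 else (cnt k m j : ℚ)) := by
    rw [coeff_mul, Finset.Nat.sum_antidiagonal_eq_sum_range_succ_mk, Finset.sum_range_succ]
    simp only [Cser, Sser, coeff_mk, Nat.sub_self]
    rw [if_neg (by omega), mul_zero, add_zero]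
    apply Finset.sum_congr rfl
    intro i hi
    have hi' : i < n := mem_range.1 hi
    rcases eq_or_ne (n - i) k with h | h
    · simp [h]
    · have h1 : 1 ≤ n - i := by omega
      simp [h, h1]
  rw [mul_sub, mul_one, map_sub, hCS]
  rcases Nat.eq_zero_or_pos n with hn | hn
  · subst hn
    simp only [range_zero, sum_empty, sub_zero, Cser, coeff_mk, cnt_zero]
    rcases Nat.eq_zero_or_pos m with hm | hm
    · subst hm; simp
    · rw [if_neg (by omega), if_neg (by omega), coeff_X_pow_mul', if_neg (by omega)]
      norm_num
  · have : (coeff n) (Cser k m) =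
        ((∑ j ∈ range n, (if n - j = k then (if m = 0 then 0 else cnt k (m - 1) j)
          else cnt k m j) : ℕ) : ℚ) := by
      rw [Cser, coeff_mk, cnt_rec k m n hn]
    rw [this, Nat.cast_sum, ← Finset.sum_sub_distrib]
    have hterm : ∀ j ∈ range n,
        (((if n - j = k then (if m = 0 then 0 else cnt k (m - 1) j) else cnt k m j : ℕ) : ℚ)
          - (if n - j = k then 0 else (cnt k m j : ℚ)))
        = if n - j = k then (if m = 0 then 0 else (cnt k (m - 1) j : ℚ)) else 0 := by
      intro j _
      split_ifs <;> simp
    rw [Finset.sum_congr rfl hterm]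
    rcases le_or_gt k n with hkn | hkn
    · rw [Finset.sum_eq_single (n - k)]
      · rw [if_pos (by omega)]
        rcases Nat.eq_zero_or_pos m with hm | hm
        · subst hm
          rw [if_pos rfl, if_pos rfl, coeff_one, if_neg (by omega)]
        · rw [if_neg (by omega), if_neg (by omega), coeff_X_pow_mul', if_pos hkn, Cser, coeff_mk]
      · intro b hb hbne
        have := mem_range.1 hb
        rw [if_neg (by omega)]
      · intro habs
        exact absurd (mem_range.2 (by omega)) habs
    · rw [Finset.sum_eq_zero (fun j hj => by
        have := mem_range.1 hj
        rw [if_neg (by omega)])]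
      rcases Nat.eq_zero_or_pos m with hm | hm
      · subst hm
        rw [if_pos rfl, coeff_one, if_neg (by omega)]
      · rw [if_neg (by omega), coeff_X_pow_mul', if_neg (by omega)]
lemma S_mul (k : ℕ) (hk : 1 ≤ k) :
    Sser k * (1 - X) = X - X ^ k + X ^ (k + 1) := by
  ext n
  have hx : (coeff n) (Sser k * X) = if 1 ≤ n then coeff (n - 1) (Sser k) else 0 := by
    simpa using coeff_mul_X_pow' (Sser k) 1 n
  rw [mul_sub, mul_one, map_sub, hx, map_add, map_sub, coeff_X, coeff_X_pow, coeff_X_pow]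
  simp only [Sser, coeff_mk, pow_one]
  split_ifs <;> norm_num <;> omega

lemma SD (k : ℕ) (hk : 1 ≤ k) :
    (1 - X) * (1 - Sser k) = 1 - 2 * X + X ^ k * (1 - X) := by
  have h := S_mul k hk
  linear_combination -h

lemma CD_pow (k m : ℕ) (hk : 1 ≤ k) :
    Cser k m * (1 - 2 * X + X ^ k * (1 - X)) ^ (m + 1)
      = X ^ (k * m) * (1 - X) ^ (m + 1) := by
  induction m with
  | zero =>
    have h := key k 0 hk
    rw [if_pos rfl] at h
    have hSD := SD k hk
    rw [pow_one, ← hSD, Nat.mul_zero, pow_zero, pow_one]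
    linear_combination (1 - X : PowerSeries ℚ) * h
  | succ m ih =>
    have h := key k (m + 1) hk
    rw [if_neg (by omega)] at h
    simp only [Nat.add_sub_cancel] at h
    have hSD := SD k hk
    have hkm : k * (m + 1) = k * m + k := by ring
    rw [hkm, pow_add, pow_succ (1 - 2 * X + X ^ k * (1 - X) : PowerSeries ℚ)]
    linear_combination ((1 - X : PowerSeries ℚ) * (1 - 2 * X + X ^ k * (1 - X)) ^ (m + 1)) * h +
      (X ^ k * (1 - X) : PowerSeries ℚ) * ih +
      (-(Cser k (m + 1) * (1 - 2 * X + X ^ k * (1 - X)) ^ (m + 1))) * hSD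

lemma C_eq (k m : ℕ) (hk : 1 ≤ k) :
    Cser k m = X ^ (k * m) * (1 - X) ^ (m + 1) *
      (((1 - 2 * X + X ^ k * (1 - X) : PowerSeries ℚ)) ^ (m + 1))⁻¹ := by
  have hD : constantCoeff ((1 - 2 * X + X ^ k * (1 - X) : PowerSeries ℚ) ^ (m + 1)) ≠ 0 := by
    have : constantCoeff (1 - 2 * X + X ^ k * (1 - X) : PowerSeries ℚ) = 1 := by
      simp [zero_pow (by omega : k ≠ 0)]
    rw [map_pow, this, one_pow]
    norm_num
  rw [PowerSeries.eq_mul_inv_iff_mul_eq hD]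
  exact CD_pow k m hk

end CompositionCountAux

/-- **Lemma 1.** For fixed `k ≥ 1` and `m ≥ 0`, the number of compositions of `n ≥ 1` in which
the part size `k` has multiplicity exactly `m` is the coefficient of `z^n` in
`z^{km}(1−z)^{m+1} (1 − 2z + z^k(1−z))^{-(m+1)}` in `ℚ[[z]]`. -/
theorem count_compositions_multiplicity_eq_coeff (k m : ℕ) (hk : 1 ≤ k) (n : ℕ) (hn : 1 ≤ n) :
    (Nat.card {κ : Composition n // κ.blocks.count k = m} : ℚ) =
      PowerSeries.coeff n
        (X ^ (k * m) * (1 - X) ^ (m + 1) *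
          (((1 - 2 * X + X ^ k * (1 - X) : PowerSeries ℚ)) ^ (m + 1))⁻¹) := by
  rw [← C_eq k m hk]
  show (cnt k m n : ℚ) = PowerSeries.coeff n (Cser k m)
  rw [Cser, coeff_mk]
end

section
/- Fix an integer k ≥ 1. In the ring of formal power series ℚ[[z,w]] in two variables, Σ_{n≥1} Σ_{j≥0} c_k(n,j) z^n w^j = (z + (w−1)z^k(1−z)) · (1 − 2z − (w−1)z^k(1−z))^{-1}, where c_k(n,j) is the number of compositions of n in which the part size k has multiplicity exactly j (the denominator has constant term 1, hence is invertible). -/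
open MvPowerSeries

set_option maxHeartbeats 1000000

namespace BGF
open Finset

noncomputable def cc (k n j : ℕ) : ℕ := Nat.card {κ : Composition n // κ.blocks.count k = j}

lemma blocks_cons {n : ℕ} (hn : 1 ≤ n) (κ : Composition n) :
    κ.blocks = κ.blocks.headI :: κ.blocks.tail := by
  rcases h : κ.blocks with _ | ⟨a, l⟩
  · exfalso; have := κ.blocks_sum; rw [h] at this; simp at this; omega
  · rfl

lemma cc_card (k n j : ℕ) [DecidablePred fun κ : Composition n => κ.blocks.count k = j] :
    cc k n j = (univ.filter (fun κ : Composition n => κ.blocks.count k = j)).card := by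
  rw [cc, Nat.card_eq_fintype_card, Fintype.card_subtype]


lemma cc_zero (k j : ℕ) : cc k 0 j = if j = 0 then 1 else 0 := by
  rcases Nat.eq_zero_or_pos j with hj | hj
  · subst hj
    rw [if_pos rfl, cc, Nat.card_eq_one_iff_unique]
    constructor
    · constructor
      intro a b
      ext1
      apply Composition.ext
      rcases h : a.1.blocks with _ | ⟨x, l⟩
      · rcases h' : b.1.blocks with _ | ⟨y, m⟩
        · rfl
        · exfalso
          have hp : 0 < y := b.1.blocks_pos (by rw [h']; exact List.mem_cons_self)
          have hs := b.1.blocks_sum; rw [h'] at hs; simp at hs; omega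
      · exfalso
        have hp : 0 < x := a.1.blocks_pos (by rw [h]; exact List.mem_cons_self)
        have hs := a.1.blocks_sum; rw [h] at hs; simp at hs; omega
    · exact ⟨⟨⟨[], by simp, by simp⟩, by simp⟩⟩
  · rw [if_neg (by omega)]
    have : IsEmpty {κ : Composition 0 // κ.blocks.count k = j} := by
      constructor
      rintro ⟨κ, hκ⟩
      rcases h : κ.blocks with _ | ⟨x, l⟩
      · rw [h] at hκ; simp at hκ; omega
      · have hp : 0 < x := κ.blocks_pos (by rw [h]; exact List.mem_cons_self)
        have hs := κ.blocks_sum; rw [h] at hs; simp at hs; omega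
    simp [cc]

lemma cc_rec (k n j : ℕ) (hn : 1 ≤ n) :
    cc k n j = ∑ m ∈ Icc 1 n,
      (if m = k then (if 1 ≤ j then cc k (n - m) (j - 1) else 0) else cc k (n - m) j) := by
  classical
  rw [cc_card]
  have h2 : (univ.filter (fun κ : Composition n => κ.blocks.count k = j)).card
      = ((Icc 1 n).sigma (fun m => univ.filter
          (fun ρ : Composition (n - m) => (m :: ρ.blocks).count k = j))).card := by
    apply Finset.card_bij'
      (i := fun κ _ => ⟨κ.blocks.headI, ⟨κ.blocks.tail,
        fun h => κ.blocks_pos (List.mem_of_mem_tail h),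
        by have h := κ.blocks_sum; rw [blocks_cons hn κ] at h; simp at h; omega⟩⟩)
      (j := fun p hp => ⟨p.1 :: p.2.blocks,
        by intro i hi
           rcases List.mem_cons.1 hi with h | h
           · have := (mem_sigma.1 hp).1; simp at this; omega
           · exact p.2.blocks_pos h,
        by have := p.2.blocks_sum
           have h1 := (mem_sigma.1 hp).1
           simp at h1 ⊢
           omega⟩)
    · intro κ hκ
      apply Composition.ext
      exact (blocks_cons hn κ).symm
    · rintro ⟨m, ρ⟩ hp
      apply Sigma.ext
      · rfl
      · exact heq_of_eq (Composition.ext rfl)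
    · intro κ hκ
      rw [mem_sigma]
      constructor
      · have h1 : κ.blocks.headI ∈ κ.blocks := by
          rw [blocks_cons hn κ]; exact List.mem_cons_self
        have h2 := κ.blocks_pos h1
        have h3 := κ.blocks_sum
        rw [blocks_cons hn κ] at h3
        simp at h3
        simp
        omega
      · simp only [mem_filter, mem_univ, true_and]
        rw [← blocks_cons hn κ]
        simpa using (mem_filter.1 hκ).2
    · intro p hp
      simp only [mem_filter, mem_univ, true_and]
      exact (mem_filter.1 (mem_sigma.1 hp).2).2
  rw [h2, Finset.card_sigma]
  apply Finset.sum_congr rfl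
  intro m hm
  by_cases hmk : m = k
  · subst hmk
    rw [if_pos rfl]
    by_cases hj : 1 ≤ j
    · rw [if_pos hj, cc_card]
      congr 1
      apply Finset.filter_congr
      intro ρ _
      simp [List.count_cons]
      omega
    · rw [if_neg hj, Finset.card_eq_zero, Finset.filter_eq_empty_iff]
      intro ρ _
      simp [List.count_cons]
      omega
  · rw [if_neg hmk, cc_card]
    congr 1
    apply Finset.filter_congr
    intro ρ _
    simp [List.count_cons, hmk]



noncomputable def uu (k j x : ℕ) : ℚ := if 1 ≤ j then (cc k x (j-1) : ℚ) else 0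
noncomputable def vv (k j x : ℕ) : ℚ := (cc k x j : ℚ)
noncomputable def tt (k j m x : ℕ) : ℚ := if m = k then uu k j x else vv k j x
noncomputable def SS (k j n : ℕ) : ℚ := ∑ m ∈ Icc 1 n, tt k j m (n - m)

lemma rec' (k j n : ℕ) :
    (cc k n j : ℚ) = (if n = 0 ∧ j = 0 then 1 else 0) + SS k j n := by
  rcases Nat.eq_zero_or_pos n with h | h
  · subst h
    have : SS k j 0 = 0 := by simp [SS]
    rw [this, add_zero, cc_zero]
    split_ifs <;> simp_all <;> omega
  · rw [cc_rec k n j h, if_neg (by omega), zero_add, SS]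
    push_cast
    apply Finset.sum_congr rfl
    intro m hm
    rw [tt, uu, vv]

lemma tele (k j n : ℕ) (hn : 1 ≤ n) :
    SS k j n = SS k j (n-1) + tt k j 1 (n-1)
      + (if k ∈ Icc 2 n then uu k j (n-k) - vv k j (n-k) else 0)
      + (if k+1 ∈ Icc 2 n then vv k j (n-k-1) - uu k j (n-k-1) else 0) := by
  have h1 : Icc 1 n = insert 1 (Icc 2 n) := by ext x; simp; omega
  rw [SS, h1, Finset.sum_insert (by simp)]
  have h2 : ∑ m ∈ Icc 2 n, tt k j m (n - m)
      = (∑ m ∈ Icc 2 n, tt k j (m-1) (n - m))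
        + ∑ m ∈ Icc 2 n, (tt k j m (n-m) - tt k j (m-1) (n-m)) := by
    rw [← Finset.sum_add_distrib]; apply Finset.sum_congr rfl; intros; ring
  have h3 : ∑ m ∈ Icc 2 n, tt k j (m-1) (n - m) = SS k j (n-1) := by
    rw [SS]
    apply Finset.sum_nbij' (i := fun m => m - 1) (j := fun m => m + 1)
    · intro a ha; simp at ha ⊢; omega
    · intro a ha; simp at ha ⊢; omega
    · intro a ha; simp at ha ⊢; omega
    · intro a ha; simp at ha; omega
    · intro a ha; simp at ha; congr 1; omega
  have h4 : ∑ m ∈ Icc 2 n, (tt k j m (n-m) - tt k j (m-1) (n-m))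
      = (if k ∈ Icc 2 n then uu k j (n-k) - vv k j (n-k) else 0)
        + (if k+1 ∈ Icc 2 n then vv k j (n-k-1) - uu k j (n-k-1) else 0) := by
    have hpt : ∀ m ∈ Icc 2 n, tt k j m (n-m) - tt k j (m-1) (n-m)
        = (if m = k then uu k j (n-k) - vv k j (n-k) else 0)
          + (if m = k+1 then vv k j (n-k-1) - uu k j (n-k-1) else 0) := by
      intro m hm
      simp only [mem_Icc] at hm
      by_cases e1 : m = k
      · subst e1
        rw [if_pos rfl, if_neg (by omega), tt, tt, if_pos rfl, if_neg (by omega)]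
        ring
      · by_cases e2 : m = k + 1
        · subst e2
          rw [if_neg e1, if_pos rfl, tt, tt, if_neg e1, if_pos (by omega)]
          rw [show n - (k+1) = n - k - 1 by omega]
          ring
        · rw [if_neg e1, if_neg e2, tt, tt, if_neg e1, if_neg (by omega)]
          ring
    rw [Finset.sum_congr rfl hpt, Finset.sum_add_distrib,
      Finset.sum_ite_eq' _ k, Finset.sum_ite_eq' _ (k+1)]
  rw [h2, h3, h4]; ring


set_option maxHeartbeats 1000000 in
lemma key (k j n : ℕ) (hk : 1 ≤ k) :
    (cc k n j : ℚ) = (if n = 0 ∧ j = 0 then 1 else 0) - (if n = 1 ∧ j = 0 then 1 else 0)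
      + 2 * (if 1 ≤ n then (cc k (n-1) j : ℚ) else 0)
      + (if k ≤ n ∧ 1 ≤ j then (cc k (n-k) (j-1) : ℚ) else 0)
      - (if k ≤ n then (cc k (n-k) j : ℚ) else 0)
      - (if k+1 ≤ n ∧ 1 ≤ j then (cc k (n-k-1) (j-1) : ℚ) else 0)
      + (if k+1 ≤ n then (cc k (n-k-1) j : ℚ) else 0) := by
  rcases Nat.eq_zero_or_pos n with hn | hn
  · subst hn
    rw [cc_zero]
    rw [if_neg (show ¬(1 ≤ 0) by omega), if_neg (show ¬(k ≤ 0 ∧ 1 ≤ j) by omega),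
      if_neg (show ¬(k ≤ 0) by omega), if_neg (show ¬(k+1 ≤ 0 ∧ 1 ≤ j) by omega),
      if_neg (show ¬(k+1 ≤ 0) by omega), if_neg (show ¬((0:ℕ) = 1 ∧ j = 0) by omega)]
    split_ifs <;> simp_all
  · have hS : SS k j (n-1) = (cc k (n-1) j : ℚ) - (if n = 1 ∧ j = 0 then 1 else 0) := by
      rw [rec' k j (n-1)]
      simp only [show ((n-1 = 0 ∧ j = 0)) ↔ ((n = 1 ∧ j = 0)) from by omega]
      ring
    rw [rec' k j n, if_neg (by omega), zero_add, tele k j n hn, hS]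
    simp only [tt, uu, vv, mem_Icc]
    rw [if_pos (show 1 ≤ n by omega)]
    simp only [show (2 ≤ k + 1 ∧ k + 1 ≤ n) ↔ (k + 1 ≤ n) from by omega]
    rcases Nat.lt_or_ge k 2 with hk2 | hk2
    · have hk1 : k = 1 := by omega
      subst hk1
      rw [if_pos rfl, if_neg (show ¬(2 ≤ 1 ∧ 1 ≤ n) by omega),
        show n - 1 - 1 = n - 2 from by omega, show n - (1+1) = n - 2 from by omega]
      split_ifs <;> first | ring1 | (exfalso; omega)
    · rw [if_neg (show ¬(1 = k) by omega)]
      simp only [show (2 ≤ k ∧ k ≤ n) ↔ (k ≤ n) from by omega]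
      split_ifs <;> first | ring1 | (exfalso; omega)

noncomputable def G (k : ℕ) : MvPowerSeries (Fin 2) ℚ := fun d => (cc k (d 0) (d 1) : ℚ)

lemma coeff_G (k : ℕ) (d : Fin 2 →₀ ℕ) :
    MvPowerSeries.coeff d (G k) = (cc k (d 0) (d 1) : ℚ) := rfl

noncomputable def ee (a b : ℕ) : Fin 2 →₀ ℕ := Finsupp.single 0 a + Finsupp.single 1 b

lemma ee_le (a b : ℕ) (d : Fin 2 →₀ ℕ) : ee a b ≤ d ↔ a ≤ d 0 ∧ b ≤ d 1 := by
  rw [ee, Finsupp.le_def, Fin.forall_fin_two]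
  simp [Finsupp.single_apply]

lemma ee_sub_zero (a b : ℕ) (d : Fin 2 →₀ ℕ) : (d - ee a b) 0 = d 0 - a := by
  simp [ee, Finsupp.tsub_apply, Finsupp.single_apply]

lemma ee_sub_one (a b : ℕ) (d : Fin 2 →₀ ℕ) : (d - ee a b) 1 = d 1 - b := by
  simp [ee, Finsupp.tsub_apply, Finsupp.single_apply]

lemma eq_ee_iff (a b : ℕ) (d : Fin 2 →₀ ℕ) : d = ee a b ↔ d 0 = a ∧ d 1 = b := by
  rw [ee, DFunLike.ext_iff, Fin.forall_fin_two]
  simp [Finsupp.single_apply]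

lemma eq_zero_iff (d : Fin 2 →₀ ℕ) : d = 0 ↔ d 0 = 0 ∧ d 1 = 0 := by
  rw [DFunLike.ext_iff, Fin.forall_fin_two]
  simp

lemma two_mul_X : (2 : MvPowerSeries (Fin 2) ℚ) * X 0 = monomial (ee 1 0) 2 := by
  have h2 : (2 : MvPowerSeries (Fin 2) ℚ) = monomial 0 2 := by
    rw [show (2 : MvPowerSeries (Fin 2) ℚ) = 1 + 1 from by norm_num, ← monomial_zero_one,
      ← map_add]
    norm_num
  rw [h2, X, monomial_mul_monomial]
  congr 1
  · rw [ee]; simp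
  · norm_num

lemma X_e (a : ℕ) : (X 0 : MvPowerSeries (Fin 2) ℚ) ^ a = monomial (ee a 0) 1 := by
  rw [X_pow_eq, ee]; simp

lemma XX_e (a : ℕ) : (X 1 : MvPowerSeries (Fin 2) ℚ) * (X 0) ^ a = monomial (ee a 1) 1 := by
  rw [X_pow_eq, X, monomial_mul_monomial, ee]
  congr 1
  · rw [add_comm]
  · norm_num

lemma GD (k : ℕ) (hk : 1 ≤ k) :
    G k * (1 - 2 * X 0 - (X 1 - 1) * (X 0)^k * (1 - X 0)) = (1 - X 0 : MvPowerSeries (Fin 2) ℚ) := by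
  have hD : (1 - 2 * X 0 - (X 1 - 1) * (X 0)^k * (1 - X 0) : MvPowerSeries (Fin 2) ℚ)
      = 1 - 2 * X 0 - X 1 * (X 0)^k + (X 0)^k + X 1 * (X 0)^(k+1) - (X 0)^(k+1) := by
    ring
  rw [hD, two_mul_X, XX_e, XX_e, X_e, X_e]
  ext d
  simp only [mul_sub, mul_add, mul_one, map_sub, map_add]
  rw [coeff_mul_monomial, coeff_mul_monomial, coeff_mul_monomial, coeff_mul_monomial,
    coeff_mul_monomial, coeff_G]
  rw [show (1 : MvPowerSeries (Fin 2) ℚ) = monomial 0 1 from monomial_zero_one.symm,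
    coeff_monomial, show (X 0 : MvPowerSeries (Fin 2) ℚ) = monomial (ee 1 0) 1 from by
      rw [← X_e, pow_one], coeff_monomial]
  simp only [coeff_G, ee_le, ee_sub_zero, ee_sub_one, eq_ee_iff, eq_zero_iff]
  set n := d 0
  set j := d 1
  have hkey := key k j n hk
  simp only [show (1 ≤ n ∧ 0 ≤ j) ↔ (1 ≤ n) from by omega,
    show (k ≤ n ∧ 1 ≤ j) ↔ (k ≤ n ∧ 1 ≤ j) from Iff.rfl,
    show (k ≤ n ∧ 0 ≤ j) ↔ (k ≤ n) from by omega,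
    show (k+1 ≤ n ∧ 0 ≤ j) ↔ (k+1 ≤ n) from by omega,
    show (n = 1 ∧ j = 0) ↔ (n = 1 ∧ j = 0) from Iff.rfl]
  simp only [Nat.sub_zero, mul_one]
  try simp only [show 1 + k = k + 1 from by omega]
  try simp only [show n - (k+1) = n - k - 1 from by omega]
  rw [show (if 1 ≤ n then (cc k (n-1) j : ℚ) * 2 else 0)
      = 2 * (if 1 ≤ n then (cc k (n-1) j : ℚ) else 0) from by split_ifs <;> ring]
  rw [hkey]
  ring

end BGF

/-- The bivariate generating function for compositions by size and by multiplicity of the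
part size `k`: in `ℚ[[z,w]]`,
`Σ_{n≥1} Σ_{j≥0} c_k(n,j) z^n w^j = (z + (w−1)z^k(1−z)) (1 − 2z − (w−1)z^k(1−z))^{-1}`,
stated coefficientwise, where `c_k(n,j)` is the number of compositions of `n` in which the
part size `k` has multiplicity exactly `j`. -/
theorem bivariate_generating_function_compositions (k : ℕ) (hk : 1 ≤ k) (n j : ℕ) :
    MvPowerSeries.coeff (Finsupp.single (0 : Fin 2) n + Finsupp.single (1 : Fin 2) j)
        ((X 0 + (X 1 - 1) * (X 0) ^ k * (1 - X 0)) *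
          ((1 - 2 * X 0 - (X 1 - 1) * (X 0) ^ k * (1 - X 0) : MvPowerSeries (Fin 2) ℚ))⁻¹) =
      if 1 ≤ n then (Nat.card {κ : Composition n // κ.blocks.count k = j} : ℚ) else 0 := by
  classical
  set D : MvPowerSeries (Fin 2) ℚ := 1 - 2 * X 0 - (X 1 - 1) * (X 0)^k * (1 - X 0) with hDdef
  have hc : constantCoeff D ≠ 0 := by
    rw [hDdef]
    simp [constantCoeff_X, zero_pow (show k ≠ 0 by omega)]
  have hinv : D * D⁻¹ = 1 := MvPowerSeries.mul_inv_cancel _ hc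
  have hN : (X 0 + (X 1 - 1) * (X 0)^k * (1 - X 0) : MvPowerSeries (Fin 2) ℚ)
      = (BGF.G k - 1) * D := by
    have h2 : (BGF.G k - 1) * D = (1 - X 0) - D := by
      rw [sub_mul, one_mul, hDdef, BGF.GD k hk]
    rw [h2, hDdef]; ring
  rw [hN, mul_assoc, hinv, mul_one, map_sub, BGF.coeff_G]
  rw [show (1 : MvPowerSeries (Fin 2) ℚ) = monomial 0 1 from monomial_zero_one.symm,
    coeff_monomial]
  have h0 : ((Finsupp.single (0 : Fin 2) n + Finsupp.single 1 j : Fin 2 →₀ ℕ)) 0 = n := by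
    simp [Finsupp.single_apply]
  have h1 : ((Finsupp.single (0 : Fin 2) n + Finsupp.single 1 j : Fin 2 →₀ ℕ)) 1 = j := by
    simp [Finsupp.single_apply]
  have hd0 : ((Finsupp.single (0:Fin 2) n + Finsupp.single 1 j : Fin 2 →₀ ℕ) = 0) ↔ (n = 0 ∧ j = 0) := by
    rw [BGF.eq_zero_iff, h0, h1]
  rw [h0, h1]
  by_cases hn : 1 ≤ n
  · rw [if_pos hn, if_neg (by rw [hd0]; omega), sub_zero]
    rfl
  · have hn0 : n = 0 := by omega
    subst hn0
    rw [if_neg hn, BGF.cc_zero]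
    by_cases hj : j = 0
    · subst hj
      rw [if_pos (hd0.mpr ⟨rfl, rfl⟩), if_pos rfl]
      norm_num
    · rw [if_neg hj, if_neg (by rw [hd0]; tauto)]
      norm_num
end

section
/- For every integer k ≥ 1, the polynomial Q_k(z) = 1 − 2z + z^k(1−z) has exactly one zero, counted with multiplicity, in the closed unit disk {z ∈ ℂ : |z| ≤ 1}; this zero is a simple zero, is real, and lies in the open interval (1/2, 1). -/
open Polynomial


lemma aux_nat (m : ℕ) : 3*(m+1)*2^m ≤ 4*3^m := by
  induction m with
  | zero => norm_num
  | succ n ih =>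
    rcases Nat.eq_zero_or_pos n with h | h
    · subst h; norm_num
    · have h2 : 6*(n+2) ≤ 9*(n+1) := by omega
      calc 3*(n+1+1)*2^(n+1) = 6*(n+2)*2^n := by ring
        _ ≤ 9*(n+1)*2^n := Nat.mul_le_mul_right _ h2
        _ = 3*(3*(n+1)*2^n) := by ring
        _ ≤ 3*(4*3^n) := Nat.mul_le_mul_left _ ih
        _ = 4*3^(n+1) := by ring

lemma coeff_bound (m : ℕ) : ((m:ℝ)+1) * (2/3)^m ≤ 4/3 := by
  have h := aux_nat m
  have h' : (3*((m:ℝ)+1)*2^m) ≤ 4*3^m := by exact_mod_cast h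
  have h3 : (0:ℝ) < 3^m := by positivity
  rw [div_pow, mul_div_assoc']
  rw [div_le_div_iff₀ h3 (by norm_num : (0:ℝ) < 3)]
  nlinarith

lemma root_small (k : ℕ) (z : ℂ) (hz : ‖z‖ ≤ 1)
    (h : 1 - 2*z + z^k*(1-z) = 0) : ‖z‖ ≤ 2/3 := by
  have h1 : (2*z - 1) = z^k * (1-z) := by linear_combination -h
  have h2 : ‖2*z-1‖ ≤ ‖1-z‖ := by
    rw [h1, norm_mul, norm_pow]
    have hp : ‖z‖ ^ k ≤ 1 := pow_le_one₀ (norm_nonneg z) hz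
    have h0 := norm_nonneg (1-z)
    nlinarith [pow_nonneg (norm_nonneg z) k]
  have h3 : ‖2*z-1‖^2 ≤ ‖1-z‖^2 := by
    nlinarith [norm_nonneg (2*z-1), norm_nonneg (1-z)]
  rw [Complex.sq_norm, Complex.sq_norm] at h3
  simp [Complex.normSq_apply, Complex.sub_re, Complex.sub_im, Complex.mul_re, Complex.mul_im] at h3
  have hre : z.re ≤ ‖z‖ := Complex.re_le_norm z
  have hsq : (‖z‖)^2 = z.re^2 + z.im^2 := by
    rw [Complex.sq_norm, Complex.normSq_apply]; ring
  have h0 : 0 ≤ ‖z‖ := norm_nonneg _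
  nlinarith [h3, hre, hsq, h0]

lemma pow_sub_pow_abs (k : ℕ) (z w : ℂ) (hz : ‖z‖ ≤ 2/3) (hw : ‖w‖ ≤ 2/3) :
    ‖z^k - w^k‖ ≤ (k:ℝ) * (2/3)^(k-1) * ‖z - w‖ := by
  rw [← geom_sum₂_mul, norm_mul]
  have hb : ‖∑ i ∈ Finset.range k, z^i * w^(k-1-i)‖ ≤ (k:ℝ) * (2/3)^(k-1) := by
    calc ‖∑ i ∈ Finset.range k, z^i * w^(k-1-i)‖
        ≤ ∑ i ∈ Finset.range k, ‖z^i * w^(k-1-i)‖ :=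
          norm_sum_le _ _
      _ ≤ ∑ i ∈ Finset.range k, ((2:ℝ)/3)^(k-1) := by
          apply Finset.sum_le_sum
          intro i hi
          rw [norm_mul, norm_pow, norm_pow]
          have h1 : ‖z‖ ^ i ≤ (2/3)^i :=
            pow_le_pow_left₀ (norm_nonneg _) hz i
          have h2 : ‖w‖ ^ (k-1-i) ≤ (2/3)^(k-1-i) :=
            pow_le_pow_left₀ (norm_nonneg _) hw _
          have hik : i + (k-1-i) = k-1 := by
            have := Finset.mem_range.mp hi; omega
          calc ‖z‖ ^ i * ‖w‖ ^ (k-1-i)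
              ≤ (2/3)^i * (2/3)^(k-1-i) := by
                apply mul_le_mul h1 h2 (pow_nonneg (norm_nonneg _) _) (by positivity)
            _ = (2/3)^(k-1) := by rw [← pow_add, hik]
      _ = (k:ℝ) * (2/3)^(k-1) := by
          rw [Finset.sum_const, Finset.card_range, nsmul_eq_mul]
  exact mul_le_mul_of_nonneg_right hb (norm_nonneg _)

lemma root_eq (k : ℕ) (hk : 1 ≤ k) (z w : ℂ) (hz : ‖z‖ ≤ 1) (hw : ‖w‖ ≤ 1)
    (h1 : 1 - 2*z + z^k*(1-z) = 0) (h2 : 1 - 2*w + w^k*(1-w) = 0) : z = w := by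
  have hz2 := root_small k z hz h1
  have hw2 := root_small k w hw h2
  have habs0 : ∀ u : ℂ, ‖u‖ ≤ 2/3 → ‖u^k‖ ≤ 2/3 := by
    intro u hu
    rw [norm_pow]
    calc ‖u‖ ^ k ≤ (2/3)^k := pow_le_pow_left₀ (norm_nonneg _) hu k
      _ ≤ (2/3)^1 := pow_le_pow_of_le_one (by norm_num) (by norm_num) hk
      _ = 2/3 := pow_one _
  have hA : (4:ℝ)/3 ≤ ‖2 + z^k‖ := by
    have h := norm_add_le (2 + z^k) (-(z^k))
    simp only [add_neg_cancel_right, norm_neg] at h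
    have := habs0 z hz2
    have h2a : ‖(2:ℂ)‖ = 2 := by simp
    linarith [h, h2a ▸ h]
  have hB : (4:ℝ)/3 ≤ ‖2 + w^k‖ := by
    have h := norm_add_le (2 + w^k) (-(w^k))
    simp only [add_neg_cancel_right, norm_neg] at h
    have := habs0 w hw2
    have h2a : ‖(2:ℂ)‖ = 2 := by simp
    linarith [h, h2a ▸ h]
  have key : (z - w) * ((2 + z^k)*(2 + w^k)) = z^k - w^k := by
    linear_combination (-(2 + w^k))*h1 + (2 + z^k)*h2
  have hAbs : ‖z-w‖ * (‖2+z^k‖ * ‖2+w^k‖)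
      = ‖z^k - w^k‖ := by
    rw [← norm_mul, ← norm_mul, key]
  have hpow := pow_sub_pow_abs k z w hz2 hw2
  obtain ⟨m, rfl⟩ : ∃ m, k = m + 1 := ⟨k-1, by omega⟩
  have hco : ((m+1:ℕ):ℝ) * (2/3)^(m+1-1) ≤ 4/3 := by
    push_cast; simpa using coeff_bound m
  set r := ‖z - w‖ with hr
  have hr0 : 0 ≤ r := norm_nonneg _
  have hstep : ‖z^(m+1) - w^(m+1)‖ ≤ 4/3 * r := by
    calc ‖z^(m+1) - w^(m+1)‖ ≤ ((m+1:ℕ):ℝ) * (2/3)^(m+1-1) * r := hpow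
      _ ≤ 4/3 * r := mul_le_mul_of_nonneg_right hco hr0
  have hlow : r * (4/3 * (4/3)) ≤ r * (‖2+z^(m+1)‖ * ‖2+w^(m+1)‖) := by
    apply mul_le_mul_of_nonneg_left _ hr0
    apply mul_le_mul hA hB (by norm_num) (norm_nonneg _)
  have hr0' : r = 0 := by nlinarith [hAbs, hstep, hlow]
  have hzw : ‖z - w‖ = 0 := by rw [← hr]; exact hr0'
  exact sub_eq_zero.mp (norm_eq_zero.mp hzw)

/-- **Lemma 2 (first part).** For `k ≥ 1`, the polynomial `Q_k(z) = 1 − 2z + z^k(1−z)` has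
exactly one zero (with multiplicity) in the closed unit disk: it is a simple zero, real,
and lies in `(1/2, 1)`. -/
theorem Qk_unique_zero_in_unit_disk (k : ℕ) (hk : 1 ≤ k) :
    ∃ ρ : ℝ,
      1 / 2 < ρ ∧ ρ < 1 ∧
      (1 - 2 * X + X ^ k * (1 - X) : ℂ[X]).IsRoot (ρ : ℂ) ∧
      (1 - 2 * X + X ^ k * (1 - X) : ℂ[X]).rootMultiplicity (ρ : ℂ) = 1 ∧
      ∀ z : ℂ, ‖z‖ ≤ 1 →
        (1 - 2 * X + X ^ k * (1 - X) : ℂ[X]).IsRoot z → z = (ρ : ℂ) := by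
  obtain ⟨m, rfl⟩ : ∃ m, k = m + 1 := ⟨k-1, by omega⟩
  set f : ℝ → ℝ := fun x => 1 - 2*x + x^(m+1)*(1-x) with hf
  have hcont : ContinuousOn f (Set.Icc (1/2 : ℝ) 1) := by fun_prop
  have hmem : (0:ℝ) ∈ Set.Ioo (f 1) (f (1/2)) := by
    constructor
    · simp [hf]
    · simp only [hf]
      have : (0:ℝ) < (1/2)^(m+1) * (1 - 1/2) := by positivity
      nlinarith [this]
  obtain ⟨ρ, hρmem, hρeq⟩ := intermediate_value_Ioo' (by norm_num : (1/2:ℝ) ≤ 1) hcont hmem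
  obtain ⟨hρl, hρu⟩ := hρmem
  have hρ0 : 0 < ρ := by linarith
  -- evaluation lemma
  have heval : ∀ z : ℂ, eval z (1 - 2 * X + X ^ (m+1) * (1 - X) : ℂ[X])
      = 1 - 2*z + z^(m+1)*(1-z) := by
    intro z; simp
  have hρC : (1:ℂ) - 2*(ρ:ℂ) + (ρ:ℂ)^(m+1)*(1-(ρ:ℂ)) = 0 := by
    have : ((1 - 2*ρ + ρ^(m+1)*(1-ρ) : ℝ) : ℂ) = 0 := by
      rw [show (1 - 2*ρ + ρ^(m+1)*(1-ρ) : ℝ) = f ρ from rfl, hρeq]; simp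
    push_cast at this
    linear_combination this
  have hroot : (1 - 2 * X + X ^ (m+1) * (1 - X) : ℂ[X]).IsRoot (ρ : ℂ) := by
    rw [IsRoot, heval]; exact hρC
  have habsρ : ‖(ρ:ℂ)‖ ≤ 1 := by
    rw [Complex.norm_real, Real.norm_eq_abs, abs_of_pos hρ0]; linarith
  have hP : (1 - 2 * X + X ^ (m+1) * (1 - X) : ℂ[X]) ≠ 0 := by
    intro h
    have := congrArg (eval 0) h
    rw [heval] at this
    simp [zero_pow (Nat.succ_ne_zero m)] at this
  -- rho ≤ 2/3
  have hρ23 : ρ ≤ 2/3 := by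
    have := root_small (m+1) (ρ:ℂ) habsρ hρC
    rwa [Complex.norm_real, Real.norm_eq_abs, abs_of_pos hρ0] at this
  -- derivative nonzero
  have hder : ¬ (derivative (1 - 2 * X + X ^ (m+1) * (1 - X) : ℂ[X])).IsRoot (ρ : ℂ) := by
    have hval : eval (ρ:ℂ) (derivative (1 - 2 * X + X ^ (m+1) * (1 - X) : ℂ[X]))
        = ((-2 + ((m:ℝ)+1)*ρ^m*(1-ρ) - ρ^(m+1) : ℝ) : ℂ) := by
      simp [derivative_X_pow]
      push_cast
      ring
    rw [IsRoot, hval]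
    rw [Complex.ofReal_eq_zero]
    have hbm : ((m:ℝ)+1)*ρ^m ≤ ((m:ℝ)+1)*(2/3)^m := by
      apply mul_le_mul_of_nonneg_left (pow_le_pow_left₀ (le_of_lt hρ0) hρ23 m)
      positivity
    have hcb := coeff_bound m
    have hρm : (0:ℝ) < ρ^m := pow_pos hρ0 m
    have hρm1 : (0:ℝ) < ρ^(m+1) := pow_pos hρ0 (m+1)
    have hprod : ((m:ℝ)+1)*ρ^m*(1-ρ) ≤ (4/3)*(1/2) := by
      have h1ρ : 0 ≤ 1 - ρ := by linarith
      have h1ρ' : 1 - ρ ≤ 1/2 := by linarith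
      have hnn : (0:ℝ) ≤ ((m:ℝ)+1)*ρ^m := by positivity
      nlinarith
    intro hcontra
    nlinarith [hcontra, hprod, hρm1]
  have hmult : (1 - 2 * X + X ^ (m+1) * (1 - X) : ℂ[X]).rootMultiplicity (ρ : ℂ) = 1 := by
    have hle : (1 - 2 * X + X ^ (m+1) * (1 - X) : ℂ[X]).rootMultiplicity (ρ : ℂ) ≤ 1 := by
      by_contra hc
      push_neg at hc
      exact hder ((one_lt_rootMultiplicity_iff_isRoot hP).mp hc).2
    have hge : 1 ≤ (1 - 2 * X + X ^ (m+1) * (1 - X) : ℂ[X]).rootMultiplicity (ρ : ℂ) :=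
      (rootMultiplicity_pos hP).mpr hroot
    omega
  refine ⟨ρ, hρl, hρu, hroot, hmult, ?_⟩
  intro z hz hzroot
  rw [IsRoot, heval] at hzroot
  exact root_eq (m+1) (by omega) z (ρ:ℂ) hz habsρ hzroot hρC
end

section
/- Let ρ_k denote the unique zero of Q_k(z) = 1 − 2z + z^k(1−z) in the closed unit disk. Then ρ_k = 1/2 + 2^{-(k+2)} + O(k·2^{-2k}) as k → ∞; that is, there exist constants C and K such that |ρ_k − 1/2 − 2^{-(k+2)}| ≤ C·k/2^{2k} for all k ≥ K. -/
private lemma aux23 : ∀ k : ℕ, 3 ≤ k → (k : ℝ) * (2/3) ^ k ≤ 1 := by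
  intro k hk
  induction k with
  | zero => omega
  | succ n ih =>
    rcases Nat.lt_or_ge n 3 with h | h
    · have hn : n = 2 := by omega
      subst hn; norm_num
    · have ihn := ih h
      have hn2 : (2 : ℝ) ≤ n := by exact_mod_cast by omega
      have hp : (0:ℝ) ≤ (2/3:ℝ)^n := by positivity
      have : ((n:ℝ)+1) * (2/3)^(n+1) ≤ (n:ℝ) * (2/3)^n := by
        rw [pow_succ]
        nlinarith
      push_cast
      linarith

private lemma pow_sub_pow_le' (a b : ℝ) (hb : 0 ≤ b) (hab : b ≤ a) :
    ∀ k : ℕ, a ^ k - b ^ k ≤ k * a ^ (k - 1) * (a - b) := by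
  intro k
  induction k with
  | zero => simp
  | succ n ih =>
    rcases Nat.eq_zero_or_pos n with h | h
    · subst h; simp
    · have ha : 0 ≤ a := le_trans hb hab
      have hbn : b ^ n ≤ a ^ n := pow_le_pow_left₀ hb hab n
      have han : a * a ^ (n - 1) = a ^ n := by
        rw [← pow_succ']
        congr 1
        omega
      have h2 : a * (a ^ n - b ^ n) ≤ a * (n * a ^ (n-1) * (a - b)) :=
        mul_le_mul_of_nonneg_left ih ha
      have hs : (n + 1 : ℕ) - 1 = n := by omega
      rw [hs]
      have hab' : 0 ≤ a - b := by linarith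
      have h2' : a * (a ^ n - b ^ n) ≤ (n:ℝ) * a ^ n * (a - b) := by
        calc a * (a ^ n - b ^ n) ≤ a * (↑n * a ^ (n-1) * (a - b)) := h2
          _ = (n:ℝ) * (a * a ^ (n-1)) * (a - b) := by ring
          _ = (n:ℝ) * a ^ n * (a - b) := by rw [han]
      have ea : a ^ (n+1) = a * a ^ n := by rw [pow_succ]; ring
      have eb : b ^ (n+1) = b * b ^ n := by rw [pow_succ]; ring
      push_cast
      nlinarith [mul_le_mul_of_nonneg_right hbn hab', ea, eb, h2']

/-- **Lemma 2 (location of the root).** If `ρ k` denotes the unique zero of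
`Q_k(z) = 1 − 2z + z^k(1−z)` in the closed unit disk (a real number in `(1/2, 1)`), then
`ρ_k = 1/2 + 2^{-(k+2)} + O(k 2^{-2k})` as `k → ∞`. -/
theorem rho_asymptotics
    (ρ : ℕ → ℝ)
    (hρ_mem : ∀ k, 1 ≤ k → 1 / 2 < ρ k ∧ ρ k < 1)
    (hρ_root : ∀ k, 1 ≤ k → 1 - 2 * ρ k + (ρ k) ^ k * (1 - ρ k) = 0)
    (hρ_unique : ∀ k, 1 ≤ k → ∀ z : ℂ, ‖z‖ ≤ 1 →
      1 - 2 * z + z ^ k * (1 - z) = 0 → z = (ρ k : ℂ)) :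
    ∃ C K : ℝ, ∀ k : ℕ, K ≤ k →
      |ρ k - 1 / 2 - 1 / 2 ^ (k + 2)| ≤ C * k / 2 ^ (2 * k) := by
  refine ⟨2, 3, ?_⟩
  intro k hk
  have hk3 : 3 ≤ k := by exact_mod_cast hk
  have hk1 : 1 ≤ k := by omega
  obtain ⟨h1, h2⟩ := hρ_mem k hk1
  have heq := hρ_root k hk1
  set r := ρ k with hrdef
  have hr0 : (0:ℝ) < r := by linarith
  have hrk_le1 : r ^ k ≤ 1 := pow_le_one₀ hr0.le h2.le
  have hrk0 : (0:ℝ) ≤ r ^ k := pow_nonneg hr0.le k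
  -- Step A : r ≤ 2/3
  have hA : r ≤ 2/3 := by
    nlinarith [mul_nonneg (sub_nonneg.mpr hrk_le1) (sub_nonneg.mpr h2.le)]
  have hkpos : (0:ℝ) < k := by exact_mod_cast Nat.pos_of_ne_zero (by omega)
  -- Step B : (2/3)^k ≤ 1/k
  have h23 : (2/3:ℝ) ^ k ≤ 1 / k := by
    rw [le_div_iff₀ hkpos]
    have := aux23 k hk3
    nlinarith
  have hrk23 : r ^ k ≤ (2/3:ℝ) ^ k := pow_le_pow_left₀ hr0.le hA k
  -- Step C : r ≤ (1/2)(1 + 1/k)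
  have hC : r ≤ 1/2 * (1 + 1/k) := by
    have hmul : r ^ k * (1 - r) ≤ (2/3:ℝ)^k * (1/2) :=
      mul_le_mul hrk23 (by linarith) (by linarith) (by positivity)
    linarith
  -- Step D : r^k ≤ 3 (1/2)^k
  have hexp : (1 + 1/(k:ℝ)) ^ k ≤ 3 := by
    have he1 : (1 + 1/(k:ℝ)) ≤ Real.exp (1/k) := by
      have := Real.add_one_le_exp (1/(k:ℝ)); linarith
    have he2 : (1 + 1/(k:ℝ)) ^ k ≤ Real.exp (1/(k:ℝ)) ^ k :=
      pow_le_pow_left₀ (by positivity) he1 k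
    have he3 : Real.exp (1/(k:ℝ)) ^ k = Real.exp 1 := by
      rw [← Real.exp_nat_mul]
      congr 1
      field_simp
    have := Real.exp_one_lt_d9
    rw [he3] at he2
    linarith
  set P : ℝ := (1/2) ^ k with hPdef
  have hP0 : 0 < P := by positivity
  have hD : r ^ k ≤ 3 * P := by
    calc r ^ k ≤ (1/2 * (1 + 1/(k:ℝ))) ^ k := pow_le_pow_left₀ hr0.le hC k
      _ = P * (1 + 1/(k:ℝ)) ^ k := by rw [mul_pow]
      _ ≤ P * 3 := mul_le_mul_of_nonneg_left hexp hP0.le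
      _ = 3 * P := by ring
  -- Step E : r - 1/2 ≤ (3/4) P
  have hE : r - 1/2 ≤ 3/4 * P := by
    have : r ^ k * (1 - r) ≤ r ^ k * (1/2) :=
      mul_le_mul_of_nonneg_left (by linarith) hrk0
    nlinarith
  -- Step F : r^(k-1) ≤ 6 P
  have hpow : r ^ (k-1) * r = r ^ k := by
    rw [← pow_succ]; congr 1; omega
  have hrk1' : 0 ≤ r ^ (k-1) := pow_nonneg hr0.le _
  have hF : r ^ (k-1) ≤ 6 * P := by
    nlinarith [mul_nonneg hrk1' (by linarith : (0:ℝ) ≤ r - 1/2)]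
  -- Step G : r^k - P ≤ (9/2) k P^2
  have hPle : P ≤ r ^ k := pow_le_pow_left₀ (by norm_num) h1.le k
  have hG : r ^ k - P ≤ 9/2 * k * P ^ 2 := by
    have hmain := pow_sub_pow_le' r (1/2) (by norm_num) h1.le k
    have t1 : (k:ℝ) * r ^ (k-1) * (r - 1/2) ≤ (k:ℝ) * (6*P) * (3/4*P) := by
      apply mul_le_mul
      · exact mul_le_mul_of_nonneg_left hF hkpos.le
      · exact hE
      · linarith
      · positivity
    calc r ^ k - P = r ^ k - (1/2)^k := rfl
      _ ≤ (k:ℝ) * r ^ (k-1) * (r - 1/2) := hmain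
      _ ≤ (k:ℝ) * (6*P) * (3/4*P) := t1
      _ = 9/2 * k * P ^ 2 := by ring
  -- rewrite the goal in terms of P
  have hpne : (2:ℝ) ^ k ≠ 0 := by positivity
  have e1 : (1:ℝ) / 2 ^ (k+2) = P / 4 := by
    rw [hPdef, div_pow, one_pow, pow_add]
    field_simp
    norm_num
  have e2 : (2:ℝ) * k / 2 ^ (2*k) = 2 * k * P ^ 2 := by
    have h : ((1:ℝ)/2^k)^2 = 1/2^(2*k) := by
      rw [div_pow, one_pow, ← pow_mul, mul_comm]
    rw [hPdef, div_pow, one_pow, h]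
    ring
  rw [e1, e2, abs_le]
  have t2 : (r ^ k - P) * (1 - r) ≤ (9/2 * k * P^2) * (1/2) :=
    mul_le_mul hG (by linarith) (by linarith) (by positivity)
  have t3 : P * (r - 1/2) ≤ P * (3/4 * P) := mul_le_mul_of_nonneg_left hE hP0.le
  have t4 : 0 ≤ (r ^ k - P) * (1 - r) :=
    mul_nonneg (by linarith) (by linarith)
  have t5 : 0 ≤ P * (r - 1/2) := mul_nonneg hP0.le (by linarith)
  have hkk : (3:ℝ) ≤ k := hk
  have hkP2 : 3 * P ^ 2 ≤ (k:ℝ) * P ^ 2 :=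
    mul_le_mul_of_nonneg_right hkk (sq_nonneg P)
  have hP2 : (0:ℝ) ≤ P ^ 2 := sq_nonneg P
  constructor
  · linarith [t2, t3, t4, t5, heq, hkP2, hP2]
  · linarith [t2, t3, t4, t5, heq, hkP2, hP2]
end

section
/- For every integer k ≥ 1, the unique zero ρ_k of Q_k(z) = 1 − 2z + z^k(1−z) in the closed unit disk satisfies 1/(2 − 2^{-(k+1)}) < ρ_k < 1/2 + 2^{-(k+1)}. -/
/-- `2k ≤ 2^k` for all `k`. -/
lemma rho_bounds_two_mul_le (k : ℕ) (hk : 1 ≤ k) : 2 * k ≤ 2 ^ k := by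
  induction k with
  | zero => omega
  | succ n ih =>
    rcases Nat.eq_zero_or_pos n with h | h
    · subst h; norm_num
    · have h1 := ih h
      have h2 : 2 ≤ 2 ^ n := by
        calc 2 = 2 ^ 1 := by norm_num
        _ ≤ 2 ^ n := Nat.pow_le_pow_right (by norm_num) h
      calc 2 * (n + 1) = 2 * n + 2 := by ring
      _ ≤ 2 ^ n + 2 ^ n := by omega
      _ = 2 ^ (n + 1) := by rw [pow_succ]; ring

/-- Key inequality: `k x^(k-1)(1-x) ≤ 1 - x^k` for `x ∈ [0,1]`. -/
lemma rho_bounds_key (k : ℕ) (x : ℝ) (hx0 : 0 ≤ x) (hx1 : x ≤ 1) :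
    (k : ℝ) * x ^ (k - 1) * (1 - x) ≤ 1 - x ^ k := by
  have hgeom : (∑ i ∈ Finset.range k, x ^ i) * (x - 1) = x ^ k - 1 := geom_sum_mul x k
  have hsum : (k : ℝ) * x ^ (k - 1) ≤ ∑ i ∈ Finset.range k, x ^ i := by
    have : ∑ i ∈ Finset.range k, x ^ (k - 1) ≤ ∑ i ∈ Finset.range k, x ^ i := by
      refine Finset.sum_le_sum fun i hi => ?_
      exact pow_le_pow_of_le_one hx0 hx1 (Nat.le_sub_one_of_lt (Finset.mem_range.mp hi))
    simpa using this
  nlinarith [mul_le_mul_of_nonneg_right hsum (by linarith : (0:ℝ) ≤ 1 - x)]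

/-- `Q_k` is strictly decreasing on `[0,1]`. -/
lemma rho_bounds_anti (k : ℕ) :
    StrictAntiOn (fun x : ℝ => 1 - 2 * x + x ^ k * (1 - x)) (Set.Icc (0:ℝ) 1) := by
  have hderiv : ∀ x : ℝ, HasDerivAt (fun x : ℝ => 1 - 2 * x + x ^ k * (1 - x))
      (-2 + ((k:ℝ) * x ^ (k-1) * (1 - x) + x ^ k * (-1))) x := by
    intro x
    have h1 : HasDerivAt (fun y : ℝ => y ^ k) ((k:ℝ) * x ^ (k-1)) x := hasDerivAt_pow k x
    have h2 : HasDerivAt (fun y : ℝ => 1 - y) (-1) x := by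
      simpa using (hasDerivAt_id x).const_sub 1
    have h3 : HasDerivAt (fun y : ℝ => y ^ k * (1 - y))
        ((k:ℝ) * x ^ (k-1) * (1 - x) + x ^ k * (-1)) x := h1.mul h2
    have h4 : HasDerivAt (fun y : ℝ => 1 - 2 * y) (-2) x := by
      simpa using ((hasDerivAt_id x).const_mul 2).const_sub 1
    exact h4.add h3
  refine strictAntiOn_of_deriv_neg (convex_Icc 0 1) ?_ ?_
  · exact (Continuous.continuousOn (by continuity))
  · intro x hx
    rw [interior_Icc] at hx
    rw [(hderiv x).deriv]
    have hkey := rho_bounds_key k x (le_of_lt hx.1) (le_of_lt hx.2)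
    have hpow : 0 < x ^ k := pow_pos hx.1 k
    nlinarith

/-- Basic facts about `x2 = 2^{-k}`. -/
lemma rho_bounds_x2_facts (k : ℕ) (hk : 1 ≤ k) (x2 : ℝ) (hx2 : x2 = 1 / 2 ^ k) :
    0 < x2 ∧ x2 ≤ 1 / 2 ∧ (1 + x2) ^ k ≤ 2 := by
  have h2kpos : (0:ℝ) < 2 ^ k := by positivity
  have h2k : (2:ℝ) ≤ 2 ^ k := by
    calc (2:ℝ) = 2 ^ 1 := by norm_num
    _ ≤ 2 ^ k := pow_le_pow_right₀ (by norm_num) hk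
  have hx2pos : 0 < x2 := by rw [hx2]; positivity
  have hx2half : x2 ≤ 1 / 2 := by
    rw [hx2, div_le_div_iff₀ h2kpos (by norm_num)]; linarith
  have hkx2 : (k : ℝ) * x2 ≤ 1 / 2 := by
    have h2kle : (2 : ℝ) * k ≤ 2 ^ k := by exact_mod_cast rho_bounds_two_mul_le k hk
    rw [hx2, mul_one_div, div_le_div_iff₀ h2kpos (by norm_num)]
    linarith
  have hbern : 1 - (k:ℝ) * x2 ≤ (1 - x2) ^ k := by
    have := one_add_mul_le_pow (a := -x2) (by linarith) k
    simpa [sub_eq_add_neg] using this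
  have h1mx2 : (1:ℝ)/2 ≤ (1 - x2) ^ k := by linarith
  have hprod : (1 + x2) ^ k * (1 - x2) ^ k ≤ 1 := by
    rw [← mul_pow]
    have h1 : (1 + x2) * (1 - x2) = 1 - x2 ^ 2 := by ring
    rw [h1]
    exact pow_le_one₀ (by nlinarith) (by nlinarith)
  refine ⟨hx2pos, hx2half, ?_⟩
  nlinarith [pow_pos (by linarith : (0:ℝ) < 1 + x2) k]

/-- Upper bound for the root. -/
lemma rho_bounds_upper (k : ℕ) (hk : 1 ≤ k) (r : ℝ) (hr1 : 1 / 2 < r) (hr2 : r < 1)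
    (hroot : 1 - 2 * r + r ^ k * (1 - r) = 0) : r < 1 / 2 + 1 / 2 ^ (k + 1) := by
  obtain ⟨x2, hx2⟩ : ∃ x2 : ℝ, x2 = 1 / 2 ^ k := ⟨_, rfl⟩
  obtain ⟨hx2pos, hx2half, honepx2⟩ := rho_bounds_x2_facts k hk x2 hx2
  obtain ⟨a, ha⟩ : ∃ a : ℝ, a = (1 + x2) / 2 := ⟨_, rfl⟩
  have hgoal : 1 / 2 + 1 / 2 ^ (k + 1) = a := by
    rw [ha, hx2, pow_succ]; ring
  rw [hgoal]
  have hamem : a ∈ Set.Icc (0:ℝ) 1 := by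
    constructor
    · rw [ha]; linarith
    · rw [ha]; linarith
  have hrmem : r ∈ Set.Icc (0:ℝ) 1 := ⟨by linarith, le_of_lt hr2⟩
  have hQa : 1 - 2 * a + a ^ k * (1 - a) < 0 := by
    have h1 : a ^ k * (1 - a) = (1 + x2) ^ k * (1 - x2) / 2 ^ (k + 1) := by
      rw [ha, div_pow, pow_succ]; ring
    have h2 : (1 + x2) ^ k * (1 - x2) < 2 := by
      have hle := mul_le_mul_of_nonneg_right honepx2 (by linarith : (0:ℝ) ≤ 1 - x2)
      nlinarith
    have hx2' : x2 * 2 ^ (k + 1) = 2 := by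
      rw [hx2, pow_succ]; field_simp
    have h3 : 1 - 2 * a = -x2 := by rw [ha]; ring
    have h4 : a ^ k * (1 - a) < x2 := by
      rw [h1, div_lt_iff₀ (by positivity), hx2']
      exact h2
    rw [h3]; linarith
  have hanti := rho_bounds_anti k
  rcases lt_trichotomy r a with h | h | h
  · exact h
  · rw [h] at hroot; linarith
  · have hcon := hanti hamem hrmem h
    simp only at hcon
    rw [hroot] at hcon; linarith

/-- Lower bound for the root. -/
lemma rho_bounds_lower (k : ℕ) (hk : 1 ≤ k) (r : ℝ) (hr1 : 1 / 2 < r) (hr2 : r < 1)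
    (hroot : 1 - 2 * r + r ^ k * (1 - r) = 0) : 1 / (2 - 1 / 2 ^ (k + 1)) < r := by
  obtain ⟨x2, hx2⟩ : ∃ x2 : ℝ, x2 = 1 / 2 ^ k := ⟨_, rfl⟩
  obtain ⟨hx2pos, hx2half, _⟩ := rho_bounds_x2_facts k hk x2 hx2
  obtain ⟨e, he⟩ : ∃ e : ℝ, e = 1 / 2 ^ (k + 1) := ⟨_, rfl⟩
  have hex2 : e = x2 / 2 := by rw [he, hx2, pow_succ]; ring
  have hepos : 0 < e := by rw [hex2]; linarith
  have hequarter : e ≤ 1 / 4 := by rw [hex2]; linarith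
  have hdpos : (0:ℝ) < 2 - e := by linarith
  obtain ⟨b, hb⟩ : ∃ b : ℝ, b = 1 / (2 - e) := ⟨_, rfl⟩
  have hgoal : 1 / (2 - 1 / 2 ^ (k + 1)) = b := by rw [hb, he]
  rw [hgoal]
  have hbpos : 0 < b := by rw [hb]; positivity
  have hbhalf : 1 / 2 < b := by
    rw [hb, div_lt_div_iff₀ (by norm_num) hdpos]; linarith
  have hble : b ≤ 1 := by
    rw [hb, div_le_one hdpos]; linarith
  have hbmem : b ∈ Set.Icc (0:ℝ) 1 := ⟨le_of_lt hbpos, hble⟩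
  have hrmem : r ∈ Set.Icc (0:ℝ) 1 := ⟨by linarith, le_of_lt hr2⟩
  have hbk : 2 * e ≤ b ^ k := by
    have h12k : ((1:ℝ)/2) ^ k ≤ b ^ k :=
      pow_le_pow_left₀ (by norm_num) (le_of_lt hbhalf) k
    have h12 : ((1:ℝ)/2) ^ k = 2 * e := by
      rw [hex2, hx2, div_pow, one_pow]; ring
    linarith
  have hQb : 0 < 1 - 2 * b + b ^ k * (1 - b) := by
    have hdne : (2:ℝ) - e ≠ 0 := ne_of_gt hdpos
    have h1 : 1 - 2 * b = -e * b := by rw [hb]; field_simp; ring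
    have h2 : 1 - b = (1 - e) * b := by rw [hb]; field_simp; ring
    have h3 : 1 - 2 * b + b ^ k * (1 - b) = b * (b ^ k * (1 - e) - e) := by
      rw [h1, h2]; ring
    rw [h3]
    have : e < b ^ k * (1 - e) := by nlinarith
    nlinarith
  have hanti := rho_bounds_anti k
  rcases lt_trichotomy b r with h | h | h
  · exact h
  · rw [← h] at hroot; linarith
  · have hcon := hanti hrmem hbmem h
    simp only at hcon
    rw [hroot] at hcon; linarith

/-- **Lemma 2 (bounds for the root).** For every `k ≥ 1`, the unique zero `ρ k` of
`Q_k(z) = 1 − 2z + z^k(1−z)` in the closed unit disk satisfies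
`1/(2 − 2^{-(k+1)}) < ρ_k < 1/2 + 2^{-(k+1)}`. -/
theorem rho_bounds
    (ρ : ℕ → ℝ)
    (hρ_mem : ∀ k, 1 ≤ k → 1 / 2 < ρ k ∧ ρ k < 1)
    (hρ_root : ∀ k, 1 ≤ k → 1 - 2 * ρ k + (ρ k) ^ k * (1 - ρ k) = 0)
    (hρ_unique : ∀ k, 1 ≤ k → ∀ z : ℂ, ‖z‖ ≤ 1 →
      1 - 2 * z + z ^ k * (1 - z) = 0 → z = (ρ k : ℂ)) :
    ∀ k : ℕ, 1 ≤ k →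
      1 / (2 - 1 / 2 ^ (k + 1)) < ρ k ∧ ρ k < 1 / 2 + 1 / 2 ^ (k + 1) := by
  intro k hk
  obtain ⟨hr1, hr2⟩ := hρ_mem k hk
  have hroot := hρ_root k hk
  exact ⟨rho_bounds_lower k hk (ρ k) hr1 hr2 hroot,
         rho_bounds_upper k hk (ρ k) hr1 hr2 hroot⟩
end

section
/- There is a constant C such that for all integers k ≥ 1 and n ≥ 1, | [z^n] (1−z)·(1 − 2z + z^k(1−z))^{-1} − ((1 − ρ_k)/(2 + (k+1)ρ_k^k − k ρ_k^{k-1})) · ρ_k^{-(n+1)} | ≤ C, where [z^n] denotes the coefficient of z^n in the formal power series expansion over ℚ. -/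
open PowerSeries
open scoped ENNReal NNReal

noncomputable def QkS (k : ℕ) : PowerSeries ℚ := 1 - 2 * X + X ^ k * (1 - X)

noncomputable def ak (k n : ℕ) : ℚ :=
  coeff n ((1 - X) * ((1 - 2 * X + X ^ k * (1 - X) : PowerSeries ℚ))⁻¹)

lemma QkS_constantCoeff (k : ℕ) (hk : 1 ≤ k) : constantCoeff (QkS k) = 1 := by
  simp [QkS, map_pow, zero_pow (by omega : k ≠ 0)]

lemma QkS_mul (k : ℕ) (hk : 1 ≤ k) :
    QkS k * ((1 - X) * ((1 - 2 * X + X ^ k * (1 - X) : PowerSeries ℚ))⁻¹) = 1 - X := by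
  have h : QkS k * ((1 - X) * (QkS k)⁻¹) = (1 - X) * (QkS k * (QkS k)⁻¹) := by ring
  rw [show ((1 - 2 * X + X ^ k * (1 - X) : PowerSeries ℚ)) = QkS k from rfl, h,
    PowerSeries.mul_inv_cancel _ (by rw [QkS_constantCoeff k hk]; norm_num), mul_one]

lemma ak_rec (k : ℕ) (hk : 1 ≤ k) (n : ℕ) :
    ak k n - 2 * (if 1 ≤ n then ak k (n - 1) else 0)
      + (if k ≤ n then ak k (n - k) else 0) - (if k + 1 ≤ n then ak k (n - (k + 1)) else 0)
    = (if n = 0 then 1 else 0) - (if n = 1 then 1 else 0) := by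
  set F : PowerSeries ℚ := (1 - X) * ((1 - 2 * X + X ^ k * (1 - X) : PowerSeries ℚ))⁻¹ with hF
  have h : F - C (2:ℚ) * (X ^ 1 * F) + X ^ k * F - X ^ (k + 1) * F = 1 - X := by
    rw [← QkS_mul k hk, QkS]
    have : (C (2:ℚ)) = (2 : PowerSeries ℚ) := by simp [map_ofNat]
    rw [this]; ring
  have h2 := congrArg (coeff n) h
  simp only [map_sub, map_add, PowerSeries.coeff_C_mul, PowerSeries.coeff_X_pow_mul',
    PowerSeries.coeff_one, PowerSeries.coeff_X] at h2
  have e1 : ∀ m : ℕ, coeff m F = ak k m := fun m => rfl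
  simp only [e1] at h2
  simpa [pow_one] using h2

lemma ak_abs_le (k : ℕ) (hk : 1 ≤ k) (n : ℕ) : |ak k n| ≤ 5 ^ n := by
  induction n using Nat.strong_induction_on with
  | _ n ih =>
    have hrec := ak_rec k hk n
    have hak : ak k n = ((if n = 0 then 1 else 0) - (if n = 1 then 1 else 0))
        + 2 * (if 1 ≤ n then ak k (n - 1) else 0)
        - (if k ≤ n then ak k (n - k) else 0) + (if k + 1 ≤ n then ak k (n - (k + 1)) else 0) := by
      linarith [hrec]
    rcases Nat.eq_zero_or_pos n with rfl | hn
    · simp only [if_pos rfl] at hak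
      simp only [show ¬ (1 ≤ 0) by omega, if_false, show (0 : ℕ) ≠ 1 by omega,
        show ¬ (k ≤ 0) by omega, show ¬ (k + 1 ≤ 0) by omega] at hak
      rw [hak]; norm_num
    · -- n ≥ 1
      have hb : ∀ j : ℕ, 1 ≤ j → |(if j ≤ n then ak k (n - j) else 0)| ≤ (5 : ℚ) ^ (n - 1) := by
        intro j hj
        split_ifs with hjn
        · calc |ak k (n - j)| ≤ 5 ^ (n - j) := ih _ (by omega)
            _ ≤ (5 : ℚ) ^ (n - 1) := by
                apply pow_le_pow_right₀ (by norm_num) (by omega)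
        · simp [pow_nonneg]
      have h1 := hb 1 le_rfl
      have h2 := hb k hk
      have h3 := hb (k + 1) (by omega)
      have hone : |(if n = 0 then (1:ℚ) else 0) - (if n = 1 then 1 else 0)| ≤ 1 := by
        split_ifs <;> norm_num
      have h5 : (1 : ℚ) ≤ 5 ^ (n - 1) := one_le_pow₀ (by norm_num)
      have e0 := abs_le.mp hone
      have e1 := abs_le.mp h1
      have e2 := abs_le.mp h2
      have e3 := abs_le.mp h3
      have hfive : (5 : ℚ) ^ n = 5 * 5 ^ (n - 1) := by
        rw [← pow_succ']; congr 1; omega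
      rw [abs_le, hak, hfive]
      constructor <;> nlinarith [e0.1, e0.2, e1.1, e1.2, e2.1, e2.2, e3.1, e3.2, h5]

lemma Dk_ge_one (k : ℕ) (hk : 1 ≤ k) (p : ℝ) (hp0 : 0 < p) (hp2 : p < 1) :
    1 ≤ 2 + (k + 1 : ℝ) * p ^ k - k * p ^ (k - 1) := by
  have hpk : p ^ k = p ^ (k - 1) * p := by
    rw [← pow_succ]; congr 1; omega
  have key : p ^ (k - 1) * ((k : ℝ) - (k + 1) * p) ≤ 1 := by
    rcases le_or_gt ((k : ℝ) - (k + 1) * p) 0 with h | h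
    · have := pow_nonneg hp0.le (k - 1)
      nlinarith
    · have ha : (0 : ℝ) ≤ (1 - p) / p := div_nonneg (by linarith) hp0.le
      have hb := one_add_mul_le_pow (by linarith : (-2 : ℝ) ≤ (1 - p) / p) (k - 1)
      have hip : (1 + (1 - p) / p) = 1 / p := by field_simp; ring
      rw [hip, div_pow, one_pow] at hb
      have hpk1 : (0 : ℝ) < p ^ (k - 1) := pow_pos hp0 _
      have hcast : ((k - 1 : ℕ) : ℝ) = (k : ℝ) - 1 := by
        rw [Nat.cast_sub hk]; norm_num
      rw [hcast] at hb
      have hb' : p ^ (k - 1) * (1 + ((k : ℝ) - 1) * ((1 - p) / p)) ≤ 1 := by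
        have := mul_le_mul_of_nonneg_left hb hpk1.le
        rwa [mul_one_div, div_self (ne_of_gt hpk1)] at this
      have hstep : (k : ℝ) - (k + 1) * p ≤ 1 + ((k : ℝ) - 1) * ((1 - p) / p) := by
        rw [← sub_nonneg]
        have expand : 1 + ((k : ℝ) - 1) * ((1 - p) / p) - ((k : ℝ) - (k + 1) * p)
            = ((k + 1) * p ^ 2 - 2 * ((k : ℝ) - 1) * p + ((k : ℝ) - 1)) / p := by
          field_simp; ring
        rw [expand]
        apply div_nonneg _ hp0.le
        nlinarith [sq_nonneg ((k + 1 : ℝ) * p - ((k : ℝ) - 1)), (by exact_mod_cast hk : (1:ℝ) ≤ k)]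
      calc p ^ (k - 1) * ((k : ℝ) - (k + 1) * p)
          ≤ p ^ (k - 1) * (1 + ((k : ℝ) - 1) * ((1 - p) / p)) :=
            mul_le_mul_of_nonneg_left hstep hpk1.le
        _ ≤ 1 := hb'
  nlinarith [key]

lemma Qk_circle_lb (k : ℕ) (z : ℂ) (hz : ‖z‖ = 1) :
    (1 / 5 : ℝ) ≤ ‖1 - 2 * z + z ^ k * (1 - z)‖ := by
  have hz2 : z.re ^ 2 + z.im ^ 2 = 1 := by
    have h1 := Complex.sq_norm z
    rw [hz] at h1
    have h2 : Complex.normSq z = z.re ^ 2 + z.im ^ 2 := by rw [Complex.normSq_apply]; ring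
    rw [h2] at h1; linarith
  have hre1 : z.re ≤ 1 := by nlinarith [sq_nonneg z.im]
  have hrem : -1 ≤ z.re := by nlinarith [sq_nonneg z.im, sq_nonneg (z.re + 1)]
  set u := ‖1 - 2 * z‖ with hu
  set v := ‖1 - z‖ with hv
  have hu0 : 0 ≤ u := norm_nonneg _
  have hv0 : 0 ≤ v := norm_nonneg _
  have hu2 : u ^ 2 = 5 - 4 * z.re := by
    rw [hu, Complex.sq_norm, Complex.normSq_apply]
    simp [Complex.sub_re, Complex.sub_im, Complex.mul_re, Complex.mul_im]
    nlinarith [hz2]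
  have hv2 : v ^ 2 = 2 - 2 * z.re := by
    rw [hv, Complex.sq_norm, Complex.normSq_apply]
    simp [Complex.sub_re, Complex.sub_im]
    nlinarith [hz2]
  have hu3 : u ≤ 3 := by nlinarith [sq_nonneg (u - 3)]
  have hv22 : v ≤ 2 := by nlinarith [sq_nonneg (v - 2)]
  have hprod : (u - v) * (u + v) = 3 - 2 * z.re := by nlinarith [hu2, hv2]
  have h1' : (1 : ℝ) ≤ (u - v) * (u + v) := by rw [hprod]; linarith
  have hpos : 0 < u + v := by nlinarith
  have hdiff : 1 / 5 ≤ u - v := by nlinarith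
  have habs : ‖-(z ^ k * (1 - z))‖ = v := by
    rw [norm_neg, hv]
    rw [norm_mul, norm_pow, hz, one_pow, one_mul]
  calc (1/5 : ℝ) ≤ u - v := hdiff
    _ = ‖(1 - 2*z)‖ - ‖-(z ^ k * (1 - z))‖ := by simp only [habs, hu]
    _ ≤ ‖(1 - 2*z) - (-(z ^ k * (1 - z)))‖ := norm_sub_norm_le _ _
    _ = ‖1 - 2 * z + z ^ k * (1 - z)‖ := by
        rw [sub_neg_eq_add]
set_option maxHeartbeats 2000000 in
lemma main_est (k : ℕ) (hk : 1 ≤ k) (p : ℝ) (hp1 : 1/2 < p) (hp2 : p < 1)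
    (hroot : 1 - 2*p + p^k*(1-p) = 0)
    (huniq : ∀ z : ℂ, ‖z‖ ≤ 1 → 1 - 2*z + z^k*(1-z) = 0 → z = (p:ℂ))
    (n : ℕ) :
    |((ak k n : ℝ)) - ((1 - p) / (2 + (k+1)*p^k - k*p^(k-1))) * (1 / p^(n+1))| ≤ 11 := by
  have hp0 : 0 < p := by linarith
  set rC : ℂ := (p : ℂ) with hrC
  set D : ℝ := 2 + (k+1)*p^k - k*p^(k-1) with hD
  have hD1 : 1 ≤ D := Dk_ge_one k hk p hp0 hp2
  set DC : ℂ := (D : ℂ) with hDC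
  have hD0 : DC ≠ 0 := by
    simp only [hDC, ne_eq, Complex.ofReal_eq_zero]
    intro h; rw [h] at hD1; norm_num at hD1
  set A : ℂ := (1 - rC)/DC with hA
  set Q : ℂ → ℂ := fun z => 1 - 2*z + z^k*(1-z) with hQ
  set g : ℂ → ℂ := fun z => (1-z)*(Q z)⁻¹ - A*(rC - z)⁻¹ with hg
  have hQdef : ∀ z, Q z = 1 - 2*z + z^k*(1-z) := fun z => rfl
  have hgdef : ∀ z, g z = (1-z)*(Q z)⁻¹ - A*(rC - z)⁻¹ := fun z => rfl
  have habs_r : ‖rC‖ = p := by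
    rw [hrC, Complex.norm_real, Real.norm_eq_abs, abs_of_pos hp0]
  have hrCnorm : ‖rC‖ = p := habs_r
  have hrC0 : rC ≠ 0 := by
    rw [hrC]; simp only [ne_eq, Complex.ofReal_eq_zero]; intro h; linarith
  have hQr : Q rC = 0 := by
    have h0 : ((1 - 2*p + p^k*(1-p) : ℝ) : ℂ) = 0 := by rw [hroot]; norm_num
    rw [hQdef, hrC]; push_cast at h0 ⊢; convert h0 using 1
  have hDC_eq : DC = 2 + (k+1)*rC^k - k*rC^(k-1) := by
    rw [hDC, hD, hrC]; push_cast; ring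
  have hQne : ∀ z : ℂ, ‖z‖ ≤ 1 → z ≠ rC → Q z ≠ 0 := by
    intro z h1 h2 h0
    exact h2 (huniq z h1 h0)
  have hQdiff : ∀ z : ℂ, DifferentiableAt ℂ Q z := by
    intro z
    apply DifferentiableAt.add
    · exact (differentiableAt_const _).sub ((differentiableAt_id.const_mul _))
    · exact (differentiableAt_pow k).mul ((differentiableAt_const _).sub differentiableAt_id)
  have hQder : HasDerivAt Q (-DC) rC := by
    have h1 : HasDerivAt (fun z : ℂ => 1 - 2*z) (-2) rC := by
      simpa using ((hasDerivAt_id rC).const_mul (2:ℂ)).const_sub 1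
    have h2 : HasDerivAt (fun z : ℂ => z^k*(1-z))
        ((k * rC^(k-1)) * (1 - rC) + rC^k * (-1)) rC :=
      (hasDerivAt_pow k rC).mul ((hasDerivAt_id rC).const_sub 1)
    have h := h1.add h2
    refine h.congr_deriv ?_
    rw [hDC_eq]
    have hpow : rC^(k-1) * rC = rC^k := by
      rw [← pow_succ]; congr 1; omega
    linear_combination (-(k : ℂ)) * hpow
  have hgdiff : ∀ z : ℂ, Q z ≠ 0 → z ≠ rC → DifferentiableAt ℂ g z := by
    intro z h0 h1
    apply DifferentiableAt.sub
    · exact ((differentiableAt_const _).sub differentiableAt_id).mul ((hQdiff z).inv h0)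
    · exact (differentiableAt_const _).mul
        (((differentiableAt_const _).sub differentiableAt_id).inv
          (sub_ne_zero.mpr (Ne.symm h1)))
  have hgr : g rC = 0 := by
    rw [hgdef]; simp [hQr, sub_self]
  -- little-o condition at the singularity
  have ho : (fun z => g z - g rC) =o[nhdsWithin rC {rC}ᶜ] fun z => (z - rC)⁻¹ := by
    have hslope : Filter.Tendsto (slope Q rC) (nhdsWithin rC {rC}ᶜ) (nhds (-DC)) :=
      hasDerivAt_iff_tendsto_slope.mp hQder
    have hinv : Filter.Tendsto (fun z => (slope Q rC z)⁻¹) (nhdsWithin rC {rC}ᶜ)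
        (nhds (-DC)⁻¹) := hslope.inv₀ (neg_ne_zero.mpr hD0)
    have h1z : Filter.Tendsto (fun z : ℂ => 1 - z) (nhdsWithin rC {rC}ᶜ) (nhds (1 - rC)) :=
      ((continuous_const.sub continuous_id).tendsto rC).mono_left nhdsWithin_le_nhds
    have hT : Filter.Tendsto (fun z => (slope Q rC z)⁻¹ * (1 - z) + A) (nhdsWithin rC {rC}ᶜ)
        (nhds ((-DC)⁻¹ * (1 - rC) + A)) := (hinv.mul h1z).add tendsto_const_nhds
    have hlim0 : (-DC)⁻¹ * (1 - rC) + A = 0 := by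
      rw [hA, inv_neg, div_eq_mul_inv]; ring
    have hTeq : ∀ z : ℂ, z ≠ rC → (z - rC) * g z = (slope Q rC z)⁻¹ * (1 - z) + A := by
      intro z hz
      have hzr : z - rC ≠ 0 := sub_ne_zero.mpr hz
      rw [hgdef z, slope_def_field, div_eq_mul_inv, hQr, sub_zero, mul_inv, inv_inv]
      have h2 : (rC - z)⁻¹ = -(z - rC)⁻¹ := by
        rw [show rC - z = -(z - rC) by ring, inv_neg]
      rw [h2]
      field_simp
      ring
    have hT0 : Filter.Tendsto (fun z => (z - rC) * g z) (nhdsWithin rC {rC}ᶜ) (nhds 0) := by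
      rw [← hlim0]
      apply hT.congr'
      filter_upwards [self_mem_nhdsWithin] with z hz
      exact (hTeq z hz).symm
    rw [Asymptotics.isLittleO_iff]
    intro c hc
    have hev := hT0 (Metric.closedBall_mem_nhds (0:ℂ) hc)
    filter_upwards [hev, self_mem_nhdsWithin] with z h1 h2
    rw [Set.mem_preimage, Metric.mem_closedBall, dist_zero_right] at h1
    rw [hgr, sub_zero]
    have hzr : (z - rC) ≠ 0 := sub_ne_zero.mpr h2
    have hne : ‖z - rC‖ ≠ 0 := norm_ne_zero_iff.mpr hzr
    have hgz : ‖g z‖ = ‖(z - rC) * g z‖ * ‖(z - rC)⁻¹‖ := by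
      rw [norm_mul, norm_inv, mul_comm ‖z - rC‖ ‖g z‖, mul_assoc, mul_inv_cancel₀ hne, mul_one]
    rw [hgz]
    gcongr
  set L : ℂ := Filter.limUnder (nhdsWithin rC {rC}ᶜ) g with hL
  set gt : ℂ → ℂ := Function.update g rC L with hgt'
  have hgt : ∀ z, z ≠ rC → gt z = g z := fun z hz => Function.update_of_ne hz _ _
  have h1p : (0:ℝ) < 1 - p := by linarith
  -- global differentiability of the corrected function
  have hrem : DifferentiableOn ℂ gt (Metric.ball rC (1-p)) := by
    apply Complex.differentiableOn_update_limUnder_of_isLittleO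
      (Metric.isOpen_ball.mem_nhds (Metric.mem_ball_self h1p)) _ ho
    intro z hz
    have hz1 : z ∈ Metric.ball rC (1-p) := hz.1
    have hz2 : z ≠ rC := hz.2
    have habs : ‖z‖ ≤ 1 := by
      have hd : ‖z - rC‖ < 1 - p := by
        rw [← Complex.dist_eq]; exact Metric.mem_ball.mp hz1
      calc ‖z‖ = ‖(z - rC) + rC‖ := by ring_nf
        _ ≤ ‖z - rC‖ + ‖rC‖ := norm_add_le _ _
        _ ≤ (1 - p) + p := by rw [habs_r]; linarith
        _ = 1 := by ring
    exact (hgdiff z (hQne z habs hz2) hz2).differentiableWithinAt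
  have hG : DifferentiableOn ℂ gt (Metric.closedBall 0 1) := by
    intro z hz
    have habs : ‖z‖ ≤ 1 := by
      rw [Metric.mem_closedBall, dist_zero_right] at hz; exact hz
    by_cases hzr : z = rC
    · subst hzr
      exact (hrem.differentiableAt
        (Metric.isOpen_ball.mem_nhds (Metric.mem_ball_self h1p))).differentiableWithinAt
    · have hd := hgdiff z (hQne z habs hzr) hzr
      have hev : gt =ᶠ[nhds z] g := by
        filter_upwards [compl_singleton_mem_nhds hzr] with w hw
        exact Function.update_of_ne hw _ _
      exact (hev.differentiableAt_iff.mpr hd).differentiableWithinAt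
  have hball : HasFPowerSeriesOnBall gt (cauchyPowerSeries gt 0 1) 0 1 := by
    have h := hG.hasFPowerSeriesOnBall (R := 1) (by norm_num)
    simpa using h
  -- bound on the circle
  have hcirc : ∀ z : ℂ, ‖z‖ = 1 → ‖gt z‖ ≤ 11 := by
    intro z hz
    have hzr : z ≠ rC := by
      intro h
      rw [h, habs_r] at hz
      linarith
    rw [hgt z hzr, hgdef z]
    have h5 : (1/5 : ℝ) ≤ ‖Q z‖ := by rw [hQdef z]; exact Qk_circle_lb k z hz
    have hQinv : ‖(Q z)⁻¹‖ ≤ 5 := by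
      rw [norm_inv]
      have h51 := one_div_le_one_div_of_le (by norm_num : (0:ℝ) < 1/5) h5
      rw [one_div] at h51
      calc ‖Q z‖⁻¹ ≤ 1/(1/5) := h51
        _ = 5 := by norm_num
    have h1z : ‖(1:ℂ) - z‖ ≤ 2 := by
      calc ‖(1:ℂ) - z‖ ≤ ‖(1:ℂ)‖ + ‖z‖ := norm_sub_le _ _
        _ = 2 := by rw [norm_one, hz]; norm_num
    have hAnorm : ‖A‖ = (1 - p)/D := by
      rw [hA, norm_div]
      have h1 : (1:ℂ) - rC = ((1 - p : ℝ) : ℂ) := by rw [hrC]; push_cast; ring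
      rw [h1, hDC, Complex.norm_real, Complex.norm_real,
        Real.norm_eq_abs, Real.norm_eq_abs, abs_of_pos (by linarith), abs_of_pos (by linarith)]
    have hrz : (1 - p : ℝ) ≤ ‖rC - z‖ := by
      have hb1 : ‖z‖ - ‖rC‖ ≤ ‖z - rC‖ := norm_sub_norm_le _ _
      have hb2 : ‖z - rC‖ = ‖rC - z‖ := norm_sub_rev _ _
      have hb4 : ‖z‖ = 1 := hz
      rw [hb4, hrCnorm] at hb1
      linarith
    have hrzinv : ‖(rC - z)⁻¹‖ ≤ (1 - p)⁻¹ := by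
      rw [norm_inv]
      exact inv_anti₀ (by linarith) hrz
    calc ‖(1-z)*(Q z)⁻¹ - A*(rC - z)⁻¹‖ ≤ ‖(1-z)*(Q z)⁻¹‖ + ‖A*(rC - z)⁻¹‖ := norm_sub_le _ _
      _ = ‖(1:ℂ)-z‖*‖(Q z)⁻¹‖ + ‖A‖*‖(rC - z)⁻¹‖ := by rw [norm_mul, norm_mul]
      _ ≤ 2*5 + ((1-p)/D)*(1-p)⁻¹ := by
          rw [hAnorm]
          gcongr <;> first | exact norm_nonneg _ | exact div_nonneg (by linarith) (by linarith)
      _ ≤ 10 + 1 := by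
          have h1p0 : (1 - p) ≠ 0 := by linarith
          have heqq : ((1-p)/D)*(1-p)⁻¹ = 1/D := by
            calc ((1-p)/D)*(1-p)⁻¹ = ((1-p)*(1-p)⁻¹)/D := by ring
              _ = 1/D := by rw [mul_inv_cancel₀ h1p0]
          rw [heqq]
          have : 1/D ≤ 1 := by
            rw [div_le_one (by linarith)]; linarith
          linarith
      _ = 11 := by norm_num
  -- continuity on the circle
  have hcont : ∀ z : ℂ, ‖z‖ = 1 → ContinuousAt gt z := by
    intro z hz
    have hzr : z ≠ rC := by
      intro h; rw [h, habs_r] at hz; linarith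
    have hd := hgdiff z (hQne z (le_of_eq hz) hzr) hzr
    have hev : gt =ᶠ[nhds z] g := by
      filter_upwards [compl_singleton_mem_nhds hzr] with w hw
      exact Function.update_of_ne hw _ _
    exact hd.continuousAt.congr hev.symm
  -- coefficient bound from the Cauchy integral formula
  have hcoef : ∀ m : ℕ, ‖cauchyPowerSeries gt 0 1 m‖ ≤ 11 := by
    intro m
    have habsc : ∀ θ : ℝ, ‖circleMap 0 1 θ‖ = 1 := by
      intro θ; simp [norm_circleMap_zero]
    have hcont2 : Continuous (fun θ : ℝ => ‖gt (circleMap 0 1 θ)‖) := by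
      rw [continuous_iff_continuousAt]
      intro θ
      exact ((hcont _ (habsc θ)).comp (continuous_circleMap 0 1).continuousAt).norm
    have hint : ∫ θ : ℝ in (0)..(2 * Real.pi), ‖gt (circleMap 0 1 θ)‖ ≤ 2 * Real.pi * 11 := by
      calc ∫ θ : ℝ in (0)..(2 * Real.pi), ‖gt (circleMap 0 1 θ)‖
          ≤ ∫ _θ : ℝ in (0)..(2 * Real.pi), (11 : ℝ) := by
            apply intervalIntegral.integral_mono_on Real.two_pi_pos.le
              (hcont2.intervalIntegrable _ _) intervalIntegrable_const
            intro θ _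
            exact hcirc _ (habsc θ)
        _ = 2 * Real.pi * 11 := by simp
    have hb := norm_cauchyPowerSeries_le gt 0 1 m
    simp only [abs_one, inv_one, one_pow, mul_one] at hb
    refine hb.trans ?_
    rw [inv_mul_le_iff₀ Real.two_pi_pos]
    linarith [hint]
  set b : ℕ → ℂ := fun m => ((ak k m : ℚ) : ℂ) - A / rC^(m+1) with hbdef
  -- norms of coefficients
  have haC : ∀ m, ‖((ak k m : ℚ) : ℂ)‖ ≤ 5 ^ m := by
    intro m
    have h1 := ak_abs_le k hk m
    have h2 : ‖((ak k m : ℚ) : ℂ)‖ = |((ak k m : ℚ) : ℝ)| := by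
      rw [show ((ak k m : ℚ) : ℂ) = (((ak k m : ℚ) : ℝ) : ℂ) by push_cast; rfl]
      rw [Complex.norm_real, Real.norm_eq_abs]
    rw [h2]
    exact_mod_cast h1
  have hAnorm2 : ‖A‖ ≤ 1/2 := by
    rw [hA, norm_div]
    have h1 : (1:ℂ) - rC = ((1 - p : ℝ) : ℂ) := by rw [hrC]; push_cast; ring
    rw [h1, hDC, Complex.norm_real, Complex.norm_real, Real.norm_eq_abs, Real.norm_eq_abs,
      abs_of_pos (by linarith), abs_of_pos (by linarith)]
    rw [div_le_iff₀ (by linarith)]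
    nlinarith
  have hbnorm : ∀ m, ‖b m‖ ≤ 2 * 5 ^ m := by
    intro m
    have h1 : ‖A / rC^(m+1)‖ ≤ 2 ^ m := by
      rw [norm_div, norm_pow, hrCnorm]
      have hpm : (1/2 : ℝ)^(m+1) ≤ p^(m+1) := by
        apply pow_le_pow_left₀ (by norm_num) (by linarith)
      have hppos : (0:ℝ) < p^(m+1) := pow_pos hp0 _
      calc ‖A‖ / p^(m+1) ≤ (1/2) / p^(m+1) := by gcongr
        _ ≤ (1/2) / (1/2)^(m+1) := by gcongr
        _ = 2 ^ m := by
            rw [div_eq_iff (by positivity), pow_succ, ← mul_assoc, ← mul_pow]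
            norm_num
    calc ‖b m‖ ≤ ‖((ak k m : ℚ) : ℂ)‖ + ‖A / rC^(m+1)‖ := norm_sub_le _ _
      _ ≤ 5^m + 2^m := by gcongr; exact haC m
      _ ≤ 2 * 5^m := by
          have : (2:ℝ)^m ≤ 5^m := by gcongr <;> norm_num
          linarith
  -- the power series of gt on a small ball has coefficients b
  have hsmall : HasFPowerSeriesOnBall gt (FormalMultilinearSeries.ofScalars ℂ b) 0
      (ENNReal.ofReal (1/10)) := by
    constructor
    · rw [show ENNReal.ofReal (1/10) = ((Real.toNNReal (1/10) : NNReal) : ENNReal) from rfl]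
      apply FormalMultilinearSeries.le_radius_of_bound _ 2
      intro m
      rw [FormalMultilinearSeries.ofScalars_norm]
      have hr : ((Real.toNNReal (1/10) : NNReal) : ℝ) = 1/10 := Real.coe_toNNReal _ (by norm_num)
      rw [hr]
      calc ‖b m‖ * (1/10:ℝ)^m ≤ (2 * 5^m) * (1/10)^m :=
            mul_le_mul_of_nonneg_right (hbnorm m) (by positivity)
        _ = 2 * (1/2:ℝ)^m := by
            rw [mul_assoc, ← mul_pow]
            norm_num
        _ ≤ 2 * 1 := by
            gcongr
            exact pow_le_one₀ (by norm_num) (by norm_num)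
        _ = 2 := by norm_num
    · exact ENNReal.ofReal_pos.mpr (by norm_num)
    · intro y hy
      have hy10 : ‖y‖ < 1/10 := by
        rw [EMetric.mem_ball, edist_zero_right, ← ofReal_norm] at hy
        exact (ENNReal.ofReal_lt_ofReal_iff (by norm_num)).mp hy
      have hyr : y ≠ rC := by
        intro h; rw [h, hrCnorm] at hy10; linarith
      have hrCy : rC - y ≠ 0 := sub_ne_zero.mpr (Ne.symm hyr)
      have hy0 : 0 ≤ ‖y‖ := norm_nonneg y
      have hQy : Q y ≠ 0 := by
        rw [hQdef]
        intro h0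
        have heq2 : (1:ℂ) - 2*y = -(y^k*(1-y)) := by linear_combination h0
        have h2 : ‖(1:ℂ) - 2*y‖ = ‖y^k*(1-y)‖ := by rw [heq2, norm_neg]
        have h3 : 1 - 2*‖y‖ ≤ ‖(1:ℂ) - 2*y‖ := by
          have hns := norm_sub_norm_le (1:ℂ) (2*y)
          rw [norm_one] at hns
          have h2y : ‖(2:ℂ)*y‖ = 2*‖y‖ := by
            rw [norm_mul]; norm_num
          linarith
        have hxk : ‖y‖^k ≤ ‖y‖ := by
          calc ‖y‖^k ≤ ‖y‖^1 := pow_le_pow_of_le_one hy0 (by linarith) hk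
            _ = ‖y‖ := pow_one _
        have h4 : ‖y^k*(1-y)‖ ≤ ‖y‖*(1+‖y‖) := by
          rw [norm_mul, norm_pow]
          have h1y : ‖(1:ℂ) - y‖ ≤ 1 + ‖y‖ := by
            have hns := norm_sub_le (1:ℂ) y
            rw [norm_one] at hns; linarith
          exact mul_le_mul hxk h1y (norm_nonneg _) hy0
        nlinarith [hy10, hy0, h2, h3, h4]
      have hgeo : Summable (fun m : ℕ => (1/2 : ℝ)^m) :=
        summable_geometric_of_lt_one (by norm_num) (by norm_num)
      have hterm : ∀ (c : ℕ → ℂ), (∀ m, ‖c m‖ ≤ 5^m) → ∀ m : ℕ, ‖c m * y^m‖ ≤ (1/2)^m := by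
        intro c hc m
        rw [norm_mul, norm_pow]
        calc ‖c m‖ * ‖y‖^m ≤ 5^m * (1/10)^m :=
              mul_le_mul (hc m) (pow_le_pow_left₀ (norm_nonneg y) hy10.le m) (by positivity)
                (by positivity)
          _ = (1/2:ℝ)^m := by rw [← mul_pow]; norm_num
      have hsa : Summable (fun m => ((ak k m : ℚ):ℂ) * y^m) :=
        Summable.of_norm_bounded hgeo (hterm _ haC)
      set S : ℂ := ∑' m, ((ak k m : ℚ):ℂ) * y^m with hS
      have hs0 : HasSum (fun m => ((ak k m : ℚ):ℂ) * y^m) S := hsa.hasSum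
      have hsj : ∀ j : ℕ, HasSum (fun m => (if j ≤ m then ((ak k (m - j) : ℚ):ℂ) else 0) * y^m)
          (y^j * S) := by
        intro j
        have hinj : Function.Injective (fun m : ℕ => m + j) := add_left_injective j
        have hcomp : ((fun m' => (if j ≤ m' then ((ak k (m' - j) : ℚ):ℂ) else 0) * y^m')
            ∘ (fun m : ℕ => m + j)) = fun m => y^j * (((ak k m : ℚ):ℂ) * y^m) := by
          funext m
          simp only [Function.comp_apply, le_add_iff_nonneg_left, zero_le, if_true,
            Nat.add_sub_cancel]
          rw [pow_add]; ring
        have hz : ∀ x ∉ Set.range (fun m : ℕ => m + j),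
            (if j ≤ x then ((ak k (x - j) : ℚ):ℂ) else 0) * y^x = 0 := by
          intro x hx
          have hnot : ¬ j ≤ x := by
            intro hineq
            exact hx ⟨x - j, by simp; omega⟩
          rw [if_neg hnot, zero_mul]
        rw [← Function.Injective.hasSum_iff hinj hz, hcomp]
        exact hs0.mul_left _
      have hrecC : ∀ m : ℕ, ((ak k m : ℚ):ℂ) - 2*(if 1 ≤ m then ((ak k (m-1):ℚ):ℂ) else 0)
          + (if k ≤ m then ((ak k (m-k):ℚ):ℂ) else 0)
          - (if k+1 ≤ m then ((ak k (m-(k+1)):ℚ):ℂ) else 0)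
          = (if m = 0 then 1 else 0) - (if m = 1 then 1 else 0) := by
        intro m
        have h := ak_rec k hk m
        have h2 := congrArg (fun q : ℚ => (q : ℂ)) h
        push_cast [apply_ite (fun q : ℚ => (q : ℂ))] at h2
        convert h2 using 2 <;> simp
      have hcomb : HasSum (fun m => (((ak k m : ℚ):ℂ) * y^m
            - 2*((if 1 ≤ m then ((ak k (m-1):ℚ):ℂ) else 0) * y^m)
            + (if k ≤ m then ((ak k (m-k):ℚ):ℂ) else 0) * y^m)
            - (if k+1 ≤ m then ((ak k (m-(k+1)):ℚ):ℂ) else 0) * y^m)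
          (((S - 2*(y^1*S)) + y^k*S) - y^(k+1)*S) :=
        ((hs0.sub ((hsj 1).mul_left 2)).add (hsj k)).sub (hsj (k+1))
      have hptw : (fun m => (((ak k m : ℚ):ℂ) * y^m
            - 2*((if 1 ≤ m then ((ak k (m-1):ℚ):ℂ) else 0) * y^m)
            + (if k ≤ m then ((ak k (m-k):ℚ):ℂ) else 0) * y^m)
            - (if k+1 ≤ m then ((ak k (m-(k+1)):ℚ):ℂ) else 0) * y^m)
          = fun m => ((if m = 0 then (1:ℂ) else 0) + (if m = 1 then -y else 0)) := by
        funext m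
        have h := hrecC m
        have hfact : (((ak k m : ℚ):ℂ) * y^m
            - 2*((if 1 ≤ m then ((ak k (m-1):ℚ):ℂ) else 0) * y^m)
            + (if k ≤ m then ((ak k (m-k):ℚ):ℂ) else 0) * y^m)
            - (if k+1 ≤ m then ((ak k (m-(k+1)):ℚ):ℂ) else 0) * y^m
            = ((if m = 0 then (1:ℂ) else 0) - (if m = 1 then 1 else 0)) * y^m := by
          rw [← h]; ring
        rw [hfact]
        rcases m with _ | m
        · simp
        · rcases m with _ | m
          · simp
          · simp
      have hcc : HasSum (fun m : ℕ => ((if m = 0 then (1:ℂ) else 0) + (if m = 1 then -y else 0)))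
          (1 + -y) := (hasSum_ite_eq 0 1).add (hasSum_ite_eq 1 (-y))
      rw [hptw] at hcomb
      have hkey : ((S - 2*(y^1*S)) + y^k*S) - y^(k+1)*S = 1 + -y := hcomb.unique hcc
      have hQS : Q y * S = 1 - y := by
        rw [hQdef y]; linear_combination hkey
      have hSval : S = (1-y)*(Q y)⁻¹ := by
        rw [← hQS, mul_comm (Q y) S, mul_assoc, mul_inv_cancel₀ hQy, mul_one]
      have part1 : HasSum (fun m => ((ak k m : ℚ):ℂ) * y^m) ((1-y)*(Q y)⁻¹) := by
        rw [← hSval]; exact hs0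
      have hyrc : ‖y/rC‖ < 1 := by
        rw [norm_div, hrCnorm, div_lt_one hp0]; linarith
      have hgeo2 := (hasSum_geometric_of_norm_lt_one hyrc).mul_left (A/rC)
      have hpt : (fun m : ℕ => (A/rC) * (y/rC)^m) = fun m => (A/rC^(m+1)) * y^m := by
        funext m
        calc A/rC * (y/rC)^m = (A*y^m)/(rC*rC^m) := by rw [div_pow, div_mul_div_comm]
          _ = A/rC^(m+1) * y^m := by rw [pow_succ]; ring
      have hval : (A/rC) * (1 - y/rC)⁻¹ = A * (rC - y)⁻¹ := by
        have h1 : (1 : ℂ) - y/rC = (rC - y)/rC := by field_simp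
        rw [h1, inv_div]
        field_simp
      rw [hpt, hval] at hgeo2
      have hsum := part1.sub hgeo2
      have hgty : gt (0 + y) = (1-y)*(Q y)⁻¹ - A*(rC - y)⁻¹ := by
        rw [zero_add, hgt y hyr, hgdef y]
      rw [hgty]
      have hfin : (fun m => (FormalMultilinearSeries.ofScalars ℂ b m) (fun _ => y))
          = fun m => ((ak k m : ℚ):ℂ) * y^m - (A/rC^(m+1)) * y^m := by
        funext m
        rw [FormalMultilinearSeries.ofScalars_apply_eq]
        simp only [hbdef, smul_eq_mul]
        ring
      rw [hfin]
      exact hsum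
  have heq : FormalMultilinearSeries.ofScalars ℂ b = cauchyPowerSeries gt 0 1 :=
    hsmall.hasFPowerSeriesAt.eq_formalMultilinearSeries hball.hasFPowerSeriesAt
  have hbn : ‖b n‖ ≤ 11 := by
    have h1 : (FormalMultilinearSeries.ofScalars ℂ b n) (fun _ => (1:ℂ)) = b n := by
      rw [FormalMultilinearSeries.ofScalars_apply_eq]; simp
    have h2 := (FormalMultilinearSeries.ofScalars ℂ b n).le_opNorm (fun _ => (1:ℂ))
    rw [h1] at h2
    calc ‖b n‖ ≤ ‖FormalMultilinearSeries.ofScalars ℂ b n‖ * ∏ _i : Fin n, ‖(1:ℂ)‖ := h2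
      _ = ‖FormalMultilinearSeries.ofScalars ℂ b n‖ := by simp
      _ = ‖cauchyPowerSeries gt 0 1 n‖ := by rw [heq]
      _ ≤ 11 := hcoef n
  have hcast : b n = (((ak k n : ℝ) - ((1 - p) / D) * (1 / p^(n+1)) : ℝ) : ℂ) := by
    simp only [hbdef, hA, hDC, hrC]
    push_cast
    ring
  rw [hcast] at hbn
  rwa [Complex.norm_real, Real.norm_eq_abs] at hbn

/-- The coefficient `[z^n] (1−z)/(1 − 2z + z^k(1−z))` equals
`((1 − ρ_k)/(2 + (k+1)ρ_k^k − kρ_k^{k−1})) ρ_k^{-(n+1)} + O(1)`, uniformly in `k ≥ 1` and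
`n ≥ 1`, where `ρ k` is the unique zero of `Q_k` in the closed unit disk. -/
theorem coeff_one_sub_div_Qk_asymptotics
    (ρ : ℕ → ℝ)
    (hρ_mem : ∀ k, 1 ≤ k → 1 / 2 < ρ k ∧ ρ k < 1)
    (hρ_root : ∀ k, 1 ≤ k → 1 - 2 * ρ k + (ρ k) ^ k * (1 - ρ k) = 0)
    (hρ_unique : ∀ k, 1 ≤ k → ∀ z : ℂ, ‖z‖ ≤ 1 →
      1 - 2 * z + z ^ k * (1 - z) = 0 → z = (ρ k : ℂ)) :
    ∃ C : ℝ, ∀ k : ℕ, 1 ≤ k → ∀ n : ℕ, 1 ≤ n →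
      |((PowerSeries.coeff n
            ((1 - X) * ((1 - 2 * X + X ^ k * (1 - X) : PowerSeries ℚ))⁻¹) : ℚ) : ℝ) -
          ((1 - ρ k) / (2 + (k + 1) * (ρ k) ^ k - k * (ρ k) ^ (k - 1))) *
            (1 / (ρ k) ^ (n + 1))| ≤ C := by
  refine ⟨11, fun k hk n _hn => ?_⟩
  obtain ⟨hp1, hp2⟩ := hρ_mem k hk
  exact main_est k hk (ρ k) hp1 hp2 (hρ_root k hk) (hρ_unique k hk) n
end

section
/- Fix an integer m ≥ 1 and set q(n) = (log n − log log n − log(4(m+1)))/log 2. Then Σ_{1 ≤ k ≤ q(n)} P(k ∈ M_m(κ)) = O(log n / n) as n → ∞, where the sum is over integers k and P(k ∈ M_m(κ)) is the probability that the part size k has multiplicity exactly m in a uniformly random composition κ of n. -/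
open Finset

/-- Finset of all compositions (as lists) of `n`. -/
def comps : ℕ → Finset (List ℕ)
  | 0 => {[]}
  | (n+1) => (Finset.range (n+1)).attach.biUnion
      (fun j => (comps j.1).image (fun l => (n+1-j.1) :: l))
  decreasing_by exact Finset.mem_range.mp j.2

lemma mem_comps (n : ℕ) (l : List ℕ) :
    l ∈ comps n ↔ l.sum = n ∧ ∀ x ∈ l, 0 < x := by
  induction n using Nat.strong_induction_on generalizing l with
  | _ n ih =>
    match n with
    | 0 =>
      simp only [comps, Finset.mem_singleton]
      constructor
      · rintro rfl; simp
      · rintro ⟨h1, h2⟩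
        cases l with
        | nil => rfl
        | cons a t =>
          exfalso
          have := h2 a (by simp)
          simp at h1
          omega
    | (n+1) =>
      simp only [comps, Finset.mem_biUnion, Finset.mem_image, Finset.mem_attach,
        true_and, Subtype.exists, Finset.mem_range]
      constructor
      · rintro ⟨j, hj, l', hl', rfl⟩
        rw [ih j (by omega)] at hl'
        constructor
        · simp [hl'.1]; omega
        · intro x hx
          rcases List.mem_cons.mp hx with rfl | hx
          · omega
          · exact hl'.2 x hx
      · rintro ⟨h1, h2⟩
        cases l with
        | nil => simp at h1
        | cons a t =>
          have ha : 0 < a := h2 a (by simp)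
          have h1' : a + t.sum = n + 1 := by simpa using h1
          refine ⟨n + 1 - a, by omega, t, ?_, ?_⟩
          · rw [ih (n+1-a) (by omega)]
            exact ⟨by omega, fun x hx => h2 x (by simp [hx])⟩
          · congr 1; omega

/-- Link with `Composition`. -/
lemma natCard_eq_comps_card (n k m : ℕ) :
    Nat.card {κ : Composition n // κ.blocks.count k = m}
      = ((comps n).filter (fun l => l.count k = m)).card := by
  rw [Nat.card_eq_fintype_card, Fintype.card_subtype]
  apply Finset.card_bij (fun κ _ => κ.blocks)
  · intro κ hκ
    simp only [Finset.mem_filter, mem_comps]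
    refine ⟨⟨κ.blocks_sum, fun x hx => κ.blocks_pos hx⟩, ?_⟩
    simpa using hκ
  · intro a ha b hb h
    exact Composition.ext h
  · intro l hl
    simp only [Finset.mem_filter, mem_comps] at hl
    exact ⟨⟨l, fun {i} hi => hl.1.2 i hi, hl.1.1⟩, by simpa using hl.2, rfl⟩

lemma card_filter_image_cons_le (s : Finset (List ℕ)) (p : List ℕ → Prop) [DecidablePred p]
    (a : ℕ) :
    ((s.image (fun l => a :: l)).filter p).card ≤ (s.filter (fun l => p (a :: l))).card := by
  have hsub : (s.image (fun l => a :: l)).filter p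
      ⊆ (s.filter (fun l => p (a :: l))).image (fun l => a :: l) := by
    intro x hx
    simp only [Finset.mem_filter, Finset.mem_image] at hx ⊢
    obtain ⟨⟨l, hl, rfl⟩, hp⟩ := hx
    exact ⟨l, ⟨hl, hp⟩, rfl⟩
  calc ((s.image (fun l => a :: l)).filter p).card
      ≤ ((s.filter (fun l => p (a :: l))).image (fun l => a :: l)).card :=
        Finset.card_le_card hsub
    _ ≤ (s.filter (fun l => p (a :: l))).card := Finset.card_image_le

lemma Bcard_succ_le (k n : ℕ) :
    ((comps (n+1)).filter (fun l => l.count k = 0)).card ≤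
      ∑ j ∈ Finset.range (n+1),
        if n+1-j = k then 0 else ((comps j).filter (fun l => l.count k = 0)).card := by
  rw [comps, Finset.filter_biUnion]
  refine le_trans (Finset.card_biUnion_le) ?_
  rw [← Finset.sum_attach (Finset.range (n+1)) (fun j =>
    if n+1-j = k then 0 else ((comps j).filter (fun l => l.count k = 0)).card)]
  apply Finset.sum_le_sum
  intro j _
  refine le_trans (card_filter_image_cons_le _ _ _) ?_
  by_cases hjk : n+1-j.1 = k
  · simp only [hjk, if_pos]
    have : (comps j.1).filter (fun l => (k :: l).count k = 0) = ∅ := by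
      apply Finset.filter_false_of_mem
      intro l _
      simp [List.count_cons]
    simp [this]
  · simp only [hjk, if_neg, ite_false]
    apply le_of_eq
    congr 1
    apply Finset.filter_congr
    intro l _
    simp [List.count_cons, hjk]

lemma Bcard_le_rho_pow (k : ℕ) (hk : 1 ≤ k) (L : ℕ) :
    ((((comps L).filter (fun l => l.count k = 0)).card : ℝ))
      ≤ (2 - (1/2:ℝ)^(k+1))^L := by
  set ε : ℝ := (1/2:ℝ)^(k+1) with hεdef
  have hε0 : 0 < ε := by positivity
  have hε4 : ε ≤ 1/4 := by
    have h1 : (1/2:ℝ)^(k+1) ≤ (1/2:ℝ)^2 := by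
      apply pow_le_pow_of_le_one (by norm_num) (by norm_num) (by omega)
    rw [hεdef]
    refine le_trans h1 (by norm_num)
  have hhalf : (1/2:ℝ)^k * 2^k = 1 := by
    rw [← mul_pow]; norm_num
  have hεk : ε * 2^k = 1/2 := by
    calc ε * 2^k = ((1/2:ℝ)^k * 2^k) * (1/2) := by rw [hεdef, pow_succ]; ring
      _ = 1/2 := by rw [hhalf]; ring
  set ρ : ℝ := 2 - ε with hρdef
  have hρ1 : 1 < ρ := by rw [hρdef]; linarith
  have hρ2 : ρ < 2 := by rw [hρdef]; linarith
  induction L using Nat.strong_induction_on with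
  | _ L ih =>
    match L with
    | 0 =>
      simp [comps, Finset.filter_singleton]
    | (L+1) =>
      have hrec := Bcard_succ_le k L
      have hcast : ((((comps (L+1)).filter (fun l => l.count k = 0)).card : ℝ))
          ≤ ∑ j ∈ Finset.range (L+1),
              (if L+1-j = k then (0:ℝ)
               else (((comps j).filter (fun l => l.count k = 0)).card : ℝ)) := by
        calc ((((comps (L+1)).filter (fun l => l.count k = 0)).card : ℝ))
            ≤ ((∑ j ∈ Finset.range (L+1),
                if L+1-j = k then 0 else ((comps j).filter (fun l => l.count k = 0)).card : ℕ) : ℝ) := by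
              exact_mod_cast hrec
          _ = _ := by
              push_cast
              apply Finset.sum_congr rfl
              intro j _
              split <;> simp
      refine le_trans hcast ?_
      have hterm : ∀ j ∈ Finset.range (L+1),
          (if L+1-j = k then (0:ℝ)
           else (((comps j).filter (fun l => l.count k = 0)).card : ℝ))
          ≤ (if L+1-j = k then (0:ℝ) else ρ^j) := by
        intro j hj
        split
        · exact le_refl 0
        · exact ih j (Finset.mem_range.mp hj)
      refine le_trans (Finset.sum_le_sum hterm) ?_
      have hρpos : (0:ℝ) < ρ := by linarith
      have hρk2k : ρ^k ≤ 2^k := pow_le_pow_left₀ (by linarith) (by linarith) k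
      have hgeom : ∑ j ∈ Finset.range (L+1), ρ^j = (ρ^(L+1) - 1)/(ρ - 1) :=
        geom_sum_eq (by linarith) (L+1)
      by_cases hkL : k ≤ L+1
      · -- the term j = L+1-k is excluded
        have hsplit : ∑ j ∈ Finset.range (L+1),
            (if L+1-j = k then (0:ℝ) else ρ^j)
            = (∑ j ∈ Finset.range (L+1), ρ^j) - ρ^(L+1-k) := by
          have h1 : ∀ j ∈ Finset.range (L+1),
              (if L+1-j = k then (0:ℝ) else ρ^j)
              = ρ^j - (if j = L+1-k then ρ^(L+1-k) else 0) := by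
            intro j hj
            have hjL : j < L+1 := Finset.mem_range.mp hj
            by_cases h : L+1-j = k
            · have hje : j = L+1-k := by omega
              rw [if_pos h, if_pos hje, hje]
              ring
            · have : ¬ (j = L+1-k) := by omega
              simp [h, this]
          rw [Finset.sum_congr rfl h1, Finset.sum_sub_distrib]
          congr 1
          rw [Finset.sum_ite_eq' (Finset.range (L+1)) (L+1-k) (fun _ => ρ^(L+1-k))]
          simp only [Finset.mem_range, if_pos (by omega : L+1-k < L+1)]
        rw [hsplit, hgeom]
        have hPpos : (0:ℝ) < ρ^(L+1-k) := pow_pos hρpos _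
        have hpowsplit : ρ^(L+1) = ρ^(L+1-k) * ρ^k := by
          rw [← pow_add]
          congr 1
          omega
        rw [div_sub' (by linarith : ρ - 1 ≠ 0), div_le_iff₀ (by linarith : (0:ℝ) < ρ - 1)]
        have h2kpos : (0:ℝ) < 2^k := by positivity
        have hρ1e : ρ - 1 = 1 - ε := by rw [hρdef]; ring
        have hεwork : ε * ρ^(L+1) ≤ (1/2) * ρ^(L+1-k) := by
          rw [hpowsplit]
          calc ε * (ρ^(L+1-k) * ρ^k) = (ε * ρ^k) * ρ^(L+1-k) := by ring
            _ ≤ (ε * 2^k) * ρ^(L+1-k) := by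
                apply mul_le_mul_of_nonneg_right _ (le_of_lt hPpos)
                exact mul_le_mul_of_nonneg_left hρk2k (le_of_lt hε0)
            _ = (1/2) * ρ^(L+1-k) := by rw [hεk]
        rw [hρ1e]
        nlinarith [hεwork, hPpos.le,
          mul_nonneg hPpos.le (show (0:ℝ) ≤ 1/2 - ε by linarith)]
      · -- no excluded term
        have hall : ∑ j ∈ Finset.range (L+1),
            (if L+1-j = k then (0:ℝ) else ρ^j) = ∑ j ∈ Finset.range (L+1), ρ^j := by
          apply Finset.sum_congr rfl
          intro j hj
          have hjL : j < L+1 := Finset.mem_range.mp hj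
          have : ¬ (L+1-j = k) := by omega
          simp [this]
        rw [hall, hgeom]
        have hρL : ρ^(L+1) ≤ 2^k := by
          calc ρ^(L+1) ≤ 2^(L+1) := pow_le_pow_left₀ (by linarith) (by linarith) _
            _ ≤ 2^k := pow_le_pow_right₀ (by norm_num) (by omega)
        have hρLpos : (0:ℝ) < ρ^(L+1) := pow_pos hρpos _
        rw [div_le_iff₀ (by linarith : (0:ℝ) < ρ - 1)]
        have hρ1e : ρ - 1 = 1 - ε := by rw [hρdef]; ring
        rw [hρ1e]
        have : ε * ρ^(L+1) ≤ 1/2 := by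
          calc ε * ρ^(L+1) ≤ ε * 2^k := mul_le_mul_of_nonneg_left hρL (le_of_lt hε0)
            _ = 1/2 := hεk
        nlinarith

/-- Finset of all boolean lists of length `n`. -/
def blists : ℕ → Finset (List Bool)
  | 0 => {[]}
  | (n+1) => (blists n).image (fun l => true :: l) ∪ (blists n).image (fun l => false :: l)

lemma mem_blists (n : ℕ) (v : List Bool) : v ∈ blists n ↔ v.length = n := by
  induction n generalizing v with
  | zero => simp [blists]
  | succ n ih =>
    simp only [blists, Finset.mem_union, Finset.mem_image]
    constructor
    · rintro (⟨l, hl, rfl⟩ | ⟨l, hl, rfl⟩) <;> simp [ih _ |>.mp hl]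
    · intro hlen
      cases v with
      | nil => simp at hlen
      | cons b t =>
        have ht : t ∈ blists n := (ih t).mpr (by simpa using hlen)
        cases b
        · exact Or.inr ⟨t, ht, rfl⟩
        · exact Or.inl ⟨t, ht, rfl⟩

lemma card_filter_image_cons_le' (s : Finset (List Bool)) (p : List Bool → Prop)
    [DecidablePred p] (a : Bool) :
    ((s.image (fun l => a :: l)).filter p).card ≤ (s.filter (fun l => p (a :: l))).card := by
  have hsub : (s.image (fun l => a :: l)).filter p
      ⊆ (s.filter (fun l => p (a :: l))).image (fun l => a :: l) := by
    intro x hx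
    simp only [Finset.mem_filter, Finset.mem_image] at hx ⊢
    obtain ⟨⟨l, hl, rfl⟩, hp⟩ := hx
    exact ⟨l, ⟨hl, hp⟩, rfl⟩
  calc ((s.image (fun l => a :: l)).filter p).card
      ≤ ((s.filter (fun l => p (a :: l))).image (fun l => a :: l)).card :=
        Finset.card_le_card hsub
    _ ≤ (s.filter (fun l => p (a :: l))).card := Finset.card_image_le

lemma blists_count_le_choose (n m : ℕ) :
    ((blists n).filter (fun v => v.count true = m)).card ≤ n.choose m := by
  induction n generalizing m with
  | zero =>
    match m with
    | 0 => simp [blists, Finset.filter_singleton]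
    | (m+1) => simp [blists, Finset.filter_singleton]
  | succ n ih =>
    rw [blists]
    rw [Finset.filter_union]
    refine le_trans (Finset.card_union_le _ _) ?_
    have h1 : (((blists n).image (fun l => true :: l)).filter
        (fun v => v.count true = m)).card ≤ (if m = 0 then 0 else n.choose (m-1)) := by
      refine le_trans (card_filter_image_cons_le' _ _ _) ?_
      by_cases hm : m = 0
      · subst hm
        have : (blists n).filter (fun l => (true :: l).count true = 0) = ∅ := by
          apply Finset.filter_false_of_mem
          intro l _
          simp [List.count_cons]
        simp [this]
      · rw [if_neg hm]
        have hpred : (blists n).filter (fun l => (true :: l).count true = m)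
            = (blists n).filter (fun v => v.count true = m - 1) := by
          apply Finset.filter_congr
          intro l _
          simp only [List.count_cons, beq_self_eq_true, if_true]
          omega
        rw [hpred]
        exact ih (m-1)
    have h2 : (((blists n).image (fun l => false :: l)).filter
        (fun v => v.count true = m)).card ≤ n.choose m := by
      refine le_trans (card_filter_image_cons_le' _ _ _) ?_
      have hpred : (blists n).filter (fun l => (false :: l).count true = m)
          = (blists n).filter (fun v => v.count true = m) := by
        apply Finset.filter_congr
        intro l _
        simp [List.count_cons]
      rw [hpred]
      exact ih m
    refine le_trans (add_le_add h1 h2) ?_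
    by_cases hm : m = 0
    · simp [hm]
    · rw [if_neg hm]
      obtain ⟨m', rfl⟩ : ∃ m', m = m'+1 :=
        ⟨m-1, (Nat.succ_pred_eq_of_pos (Nat.pos_of_ne_zero hm)).symm⟩
      simp only [Nat.add_sub_cancel]
      rw [Nat.choose_succ_succ]

lemma length_le_sum_of_pos (l : List ℕ) (h : ∀ x ∈ l, 0 < x) : l.length ≤ l.sum := by
  induction l with
  | nil => simp
  | cons a t ih =>
    have ha := h a (by simp)
    have := ih (fun x hx => h x (by simp [hx]))
    simp only [List.length_cons, List.sum_cons]
    omega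

lemma sum_count_filter (k : ℕ) (l : List ℕ) :
    l.sum = k * l.count k + (l.filter (fun x => x ≠ k)).sum := by
  induction l with
  | nil => simp
  | cons a t ih =>
    by_cases h : a = k
    · subst h
      rw [List.sum_cons, List.count_cons_self, List.filter_cons_of_neg (by simp), ih]
      ring
    · rw [List.sum_cons, List.count_cons_of_ne h, List.filter_cons_of_pos (by simp [h]),
        List.sum_cons, ih]
      ring

lemma map_filter_determines (k : ℕ) : ∀ l₁ l₂ : List ℕ,
    l₁.map (fun x => x == k) = l₂.map (fun x => x == k) →
    l₁.filter (fun x => x ≠ k) = l₂.filter (fun x => x ≠ k) → l₁ = l₂ := by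
  intro l₁
  induction l₁ with
  | nil =>
    intro l₂ hm _
    exact (List.map_eq_nil_iff.mp hm.symm).symm
  | cons a t ih =>
    intro l₂ hm hf
    cases l₂ with
    | nil => simp at hm
    | cons b s =>
      simp only [List.map_cons, List.cons.injEq] at hm
      obtain ⟨hab, hts⟩ := hm
      by_cases hak : a = k
      · have hbk : b = k := by
          subst hak
          simpa using hab.symm
        subst hak
        subst hbk
        rw [List.filter_cons_of_neg (by simp), List.filter_cons_of_neg (by simp)] at hf
        rw [ih s hts hf]
      · have hbk : ¬ b = k := by
          intro hb
          subst hb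
          simp [hak] at hab
        rw [List.filter_cons_of_pos (by simp [hak]),
          List.filter_cons_of_pos (by simp [hbk]), List.cons.injEq] at hf
        obtain ⟨hab2, hf'⟩ := hf
        subst hab2
        rw [ih s hts hf']

lemma length_eq_count_add_filter (k : ℕ) (l : List ℕ) :
    l.length = l.count k + (l.filter (fun x => x ≠ k)).length := by
  induction l with
  | nil => simp
  | cons a t ih =>
    by_cases h : a = k
    · subst h
      rw [List.length_cons, List.count_cons_self, List.filter_cons_of_neg (by simp)]
      omega
    · rw [List.length_cons, List.count_cons_of_ne h,
        List.filter_cons_of_pos (by simp [h]), List.length_cons]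
      omega

lemma Acard_le_mul (n k m : ℕ) (hk : 1 ≤ k) (hmk : m * k ≤ n) :
    ((comps n).filter (fun l => l.count k = m)).card ≤
      ((blists n).filter (fun v => v.count true = m)).card *
        ((comps (n - m*k)).filter (fun l => l.count k = 0)).card := by
  rw [← Finset.card_product]
  apply Finset.card_le_card_of_injOn
    (fun l => (l.map (fun x => x == k) ++ List.replicate (n - l.length) false,
               l.filter (fun x => x ≠ k)))
  · intro l hl
    simp only [Finset.mem_coe, Finset.mem_filter, mem_comps] at hl
    obtain ⟨⟨hsum, hpos⟩, hcount⟩ := hl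
    have hlen : l.length ≤ n := hsum ▸ length_le_sum_of_pos l hpos
    have hcnt_mask : (l.map (fun x => x == k)).count true = m := by
      rw [List.count, List.countP_map]
      rw [← hcount, List.count]
      congr 1
      funext x
      simp [Function.comp]
    have hsum_split := sum_count_filter k l
    simp only [Finset.mem_coe, Finset.mem_product, Finset.mem_filter, mem_blists, mem_comps]
    refine ⟨⟨?_, ?_⟩, ⟨?_, ?_⟩, ?_⟩
    · simp [hlen]
    · rw [List.count_append, hcnt_mask]
      simp [List.count_replicate]
    · have h1 : (l.filter (fun x => x ≠ k)).sum = l.sum - k * l.count k := by omega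
      rw [h1, hsum, hcount, mul_comm k m]
    · intro x hx
      exact hpos x (List.mem_of_mem_filter hx)
    · rw [List.count_eq_zero]
      intro hmem
      have := List.of_mem_filter hmem
      simp at this
  · intro l₁ h₁ l₂ h₂ heq
    simp only [Finset.mem_coe, Finset.mem_filter, mem_comps] at h₁ h₂
    obtain ⟨⟨hsum₁, hpos₁⟩, hcount₁⟩ := h₁
    obtain ⟨⟨hsum₂, hpos₂⟩, hcount₂⟩ := h₂
    simp only [Prod.mk.injEq] at heq
    obtain ⟨hmask, hfilt⟩ := heq
    have hlen_eq : l₁.length = l₂.length := by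
      have e₁ := length_eq_count_add_filter k l₁
      have e₂ := length_eq_count_add_filter k l₂
      rw [hcount₁] at e₁
      rw [hcount₂] at e₂
      rw [hfilt] at e₁
      omega
    have hmap_len : (l₁.map (fun x => x == k)).length = (l₂.map (fun x => x == k)).length := by
      simp [hlen_eq]
    have hmaps := (List.append_inj hmask hmap_len).1
    exact map_filter_determines k l₁ l₂ hmaps hfilt

lemma count_bound (n k m : ℕ) (hk : 1 ≤ k) (hmk : m * k ≤ n) :
    (Nat.card {κ : Composition n // κ.blocks.count k = m} : ℝ)
      ≤ (n.choose m : ℝ) * (2 - (1/2:ℝ)^(k+1))^(n - m*k) := by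
  rw [natCard_eq_comps_card]
  have h1 := Acard_le_mul n k m hk hmk
  have h2 := blists_count_le_choose n m
  have h3 := Bcard_le_rho_pow k hk (n - m*k)
  have hρpos : (0:ℝ) ≤ 2 - (1/2:ℝ)^(k+1) := by
    have : (1/2:ℝ)^(k+1) ≤ 1 := by
      apply pow_le_one₀ <;> norm_num
    linarith
  calc (((comps n).filter (fun l => l.count k = m)).card : ℝ)
      ≤ ((((blists n).filter (fun v => v.count true = m)).card : ℝ) *
          (((comps (n - m*k)).filter (fun l => l.count k = 0)).card : ℝ)) := by
        exact_mod_cast h1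
    _ ≤ (n.choose m : ℝ) * (2 - (1/2:ℝ)^(k+1))^(n - m*k) := by
        apply mul_le_mul (by exact_mod_cast h2) h3 (by positivity) (by positivity)

open Filter Asymptotics

set_option maxHeartbeats 2000000

/-- For fixed `m ≥ 1`, with `q(n) = (log n − log log n − log(4(m+1)))/log 2`, the total
probability `Σ_{1 ≤ k ≤ q(n)} P(k ∈ M_m(κ))` is `O(log n / n)` as `n → ∞`. -/
theorem sum_prob_small_k_isBigO (m : ℕ) (hm : 1 ≤ m) :
    (fun n : ℕ =>
        ∑ k ∈ Finset.Icc 1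
            ⌊(Real.log n - Real.log (Real.log n) - Real.log (4 * (m + 1))) / Real.log 2⌋₊,
          (Nat.card {κ : Composition n // κ.blocks.count k = m} : ℝ) / 2 ^ (n - 1)) =O[atTop]
      fun n : ℕ => Real.log n / n := by
  classical
  set C₁ : ℝ := 2 * 4^m * (Nat.factorial m) * (5/2)^m with hC₁
  have hC₁pos : 0 < C₁ := by positivity
  rw [Asymptotics.isBigO_iff]
  refine ⟨2 * C₁, ?_⟩
  have hsmall : ∀ᶠ x : ℝ in Filter.atTop, ‖Real.log x‖ ≤ (1/(40*((m:ℝ)+1))) * ‖x‖ :=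
    Real.isLittleO_log_id_atTop.def (by positivity)
  have hsmall' : ∀ᶠ n : ℕ in Filter.atTop,
      ‖Real.log n‖ ≤ (1/(40*((m:ℝ)+1))) * ‖(n:ℝ)‖ :=
    (tendsto_natCast_atTop_atTop (R := ℝ)).eventually hsmall
  filter_upwards [Filter.eventually_ge_atTop 3, hsmall'] with n hn3 hnsmall
  have hn0 : (0:ℝ) < n := by
    have : (3:ℝ) ≤ n := by exact_mod_cast hn3
    linarith
  have hn3R : (3:ℝ) ≤ n := by exact_mod_cast hn3
  have hlogn1 : 1 ≤ Real.log n := by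
    have h3 : Real.log 3 ≤ Real.log n := Real.log_le_log (by norm_num) hn3R
    have hl3 : 1 ≤ Real.log 3 := by
      have he := Real.exp_one_lt_d9
      have h1 : Real.exp 1 < 3 := by linarith
      calc (1:ℝ) = Real.log (Real.exp 1) := (Real.log_exp 1).symm
        _ ≤ Real.log 3 := Real.log_le_log (Real.exp_pos 1) h1.le
    linarith
  have hlogn0 : 0 < Real.log n := by linarith
  have hbig : 40*((m:ℝ)+1)*Real.log n ≤ n := by
    rw [Real.norm_eq_abs, Real.norm_eq_abs, abs_of_pos hlogn0, abs_of_pos hn0] at hnsmall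
    have h40 : (0:ℝ) < 40*((m:ℝ)+1) := by positivity
    calc 40*((m:ℝ)+1)*Real.log n ≤ 40*((m:ℝ)+1)*((1/(40*((m:ℝ)+1))) * n) := by
          exact mul_le_mul_of_nonneg_left hnsmall h40.le
      _ = n := by field_simp
  have hRHSpos : (0:ℝ) < Real.log n / n := by positivity
  rw [Real.norm_eq_abs, Real.norm_eq_abs, abs_of_pos hRHSpos]
  set Q : ℝ := (Real.log n - Real.log (Real.log n) - Real.log (4 * (m + 1))) / Real.log 2
    with hQdef
  set K : ℕ := ⌊Q⌋₊ with hKdef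
  by_cases hK0 : K = 0
  · rw [hK0]
    rw [Finset.Icc_eq_empty (by norm_num : ¬ (1:ℕ) ≤ 0), Finset.sum_empty, abs_zero]
    positivity
  · have hK1 : 1 ≤ K := Nat.one_le_iff_ne_zero.mpr hK0
    have hQ0 : 0 < Q := by
      by_contra h
      push_neg at h
      exact hK0 (by rw [hKdef]; exact Nat.floor_of_nonpos h)
    have hKQ : (K:ℝ) ≤ Q := Nat.floor_le hQ0.le
    have hlog2 : 0 < Real.log 2 := Real.log_pos (by norm_num)
    have hlog2half : 1/2 ≤ Real.log 2 := by
      have := Real.log_two_gt_d9; linarith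
    have hmcast : (1:ℝ) ≤ (m:ℝ) := by exact_mod_cast hm
    have hlogc : 0 ≤ Real.log (4*((m:ℝ)+1)) := Real.log_nonneg (by linarith)
    have hloglogn : 0 ≤ Real.log (Real.log n) := Real.log_nonneg hlogn1
    have hQle : Q ≤ 2 * Real.log n := by
      rw [hQdef, div_le_iff₀ hlog2]
      have hp : Real.log n ≤ 2*Real.log n * Real.log 2 := by nlinarith
      push_cast
      linarith
    have hterm : ∀ k ∈ Finset.Icc 1 K,
        (Nat.card {κ : Composition n // κ.blocks.count k = m} : ℝ) / 2 ^ (n - 1)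
          ≤ C₁ / n := by
      intro k hkmem
      obtain ⟨hk1, hkK⟩ := Finset.mem_Icc.mp hkmem
      have hkQ : (k:ℝ) ≤ Q := le_trans (by exact_mod_cast hkK) hKQ
      have hkA : (k:ℝ) * Real.log 2
          ≤ Real.log n - Real.log (Real.log n) - Real.log (4*((m:ℝ)+1)) := by
        rw [hQdef] at hkQ
        have h2 := (le_div_iff₀ hlog2).mp hkQ
        push_cast at h2 ⊢
        linarith
      have hk2logn : (k:ℝ) ≤ 2 * Real.log n := le_trans hkQ hQle
      have h2k : (2:ℝ)^k * (4*((m:ℝ)+1) * Real.log n) ≤ n := by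
        have hexpk : (2:ℝ)^k = Real.exp ((k:ℝ) * Real.log 2) := by
          rw [← Real.log_pow, Real.exp_log (by positivity)]
        have h1 : Real.exp ((k:ℝ) * Real.log 2)
            ≤ Real.exp (Real.log n - Real.log (Real.log n) - Real.log (4*((m:ℝ)+1))) :=
          Real.exp_le_exp.mpr hkA
        have h2 : Real.exp (Real.log n - Real.log (Real.log n) - Real.log (4*((m:ℝ)+1)))
            = n / (Real.log n * (4*((m:ℝ)+1))) := by
          rw [Real.exp_sub, Real.exp_sub, Real.exp_log hn0, Real.exp_log hlogn0,
            Real.exp_log (by positivity : (0:ℝ) < 4*((m:ℝ)+1))]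
          rw [div_div]
        have h3 : (2:ℝ)^k ≤ n / (Real.log n * (4*((m:ℝ)+1))) := by
          rw [hexpk]; exact le_trans h1 (le_of_eq h2)
        have hD : (0:ℝ) < Real.log n * (4*((m:ℝ)+1)) := by positivity
        have h4 := (le_div_iff₀ hD).mp h3
        linarith [h4]
      set t : ℝ := (1/2)^(k+2) with htdef
      have ht0 : 0 < t := by positivity
      have ht8 : t ≤ 1/8 := by
        have h1 : ((1:ℝ)/2)^(k+2) ≤ (1/2)^3 :=
          pow_le_pow_of_le_one (by norm_num) (by norm_num) (by omega)
        rw [htdef]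
        refine le_trans h1 (by norm_num)
      have hhalfk : ((1:ℝ)/2)^k * 2^k = 1 := by rw [← mul_pow]; norm_num
      have htval : t * (4 * 2^k) = 1 := by
        calc t * (4*2^k) = (((1:ℝ)/2)^k * 2^k) * ((1/2)^2 * 4) := by
              rw [htdef, pow_add]; ring
          _ = 1 := by rw [hhalfk]; norm_num
      have htn : ((m:ℝ)+1) * Real.log n ≤ t * n := by
        have h' : t * ((2:ℝ)^k * (4*((m:ℝ)+1)*Real.log n)) ≤ t * n :=
          mul_le_mul_of_nonneg_left h2k ht0.le
        calc ((m:ℝ)+1) * Real.log n = (t * (4*2^k)) * (((m:ℝ)+1) * Real.log n) := by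
              rw [htval]; ring
          _ = t * ((2:ℝ)^k * (4*((m:ℝ)+1)*Real.log n)) := by ring
          _ ≤ t * n := h'
      have hmkR : (m:ℝ)*k ≤ n/10 := by
        have h1 : (m:ℝ)*k ≤ (m:ℝ)*(2*Real.log n) :=
          mul_le_mul_of_nonneg_left hk2logn (by positivity)
        linarith [h1, hbig, hlogn0]
      have hmkn : m*k ≤ n := by
        have h1 : ((m*k : ℕ):ℝ) ≤ (n:ℝ) := by push_cast; linarith [hmkR, hn0]
        exact_mod_cast h1
      have hcast_sub : ((n - m*k : ℕ):ℝ) = (n:ℝ) - (m:ℝ)*k := by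
        push_cast [Nat.cast_sub hmkn]; ring
      have hcb := count_bound n k m hk1 hmkn
      have hchoose : ((n.choose m : ℕ):ℝ) ≤ (n:ℝ)^m := by
        exact_mod_cast Nat.choose_le_pow n m
      have hρ2t : (2:ℝ) - (1/2)^(k+1) = 2*(1-t) := by
        rw [htdef, pow_succ]
        ring
      have h1t0 : 0 ≤ 1 - t := by linarith
      have hsplit : ((2:ℝ) - (1/2)^(k+1))^(n - m*k) = 2^(n-m*k) * (1-t)^(n-m*k) := by
        rw [hρ2t, mul_pow]
      have h2p' : (0:ℝ) < 2^(n-1) := by positivity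
      have hpow2 : (2:ℝ)^(n - m*k) / 2^(n-1) = 2 * (1/2)^(m*k) := by
        have hn' : n - 1 + 1 = n := by omega
        have e0 : (2:ℝ)^(n-1+1) = 2*2^(n-1) := by rw [pow_succ]; ring
        rw [hn'] at e0
        have e1 : (2:ℝ)^(n - m*k) * 2^(m*k) = 2 * 2^(n-1) := by
          rw [← pow_add, Nat.sub_add_cancel hmkn]
          exact e0
        have hhmk : ((1:ℝ)/2)^(m*k) * 2^(m*k) = 1 := by rw [← mul_pow]; norm_num
        rw [div_eq_iff h2p'.ne']
        calc (2:ℝ)^(n-m*k) = (2:ℝ)^(n-m*k) * (((1:ℝ)/2)^(m*k)*2^(m*k)) := by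
              rw [hhmk]; ring
          _ = ((2:ℝ)^(n-m*k)*2^(m*k)) * ((1:ℝ)/2)^(m*k) := by ring
          _ = (2*2^(n-1)) * ((1:ℝ)/2)^(m*k) := by rw [e1]
          _ = 2*(1/2)^(m*k)*2^(n-1) := by ring
      have hhalfmk : ((1:ℝ)/2)^(m*k) = 4^m * t^m := by
        have e2 : ((1:ℝ)/2)^(m*k) = (((1:ℝ)/2)^k)^m := by rw [← pow_mul, mul_comm]
        have h12k : (4:ℝ)*t = (1/2)^k := by
          have ht4 : t = (1/2:ℝ)^k * (1/4) := by rw [htdef, pow_add]; norm_num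
          rw [ht4]; ring
        rw [e2, ← h12k, mul_pow]
      have hnum : (Nat.card {κ : Composition n // κ.blocks.count k = m} : ℝ)
          ≤ (n:ℝ)^m * (2^(n-m*k) * (1-t)^(n-m*k)) := by
        refine le_trans hcb ?_
        rw [hsplit]
        exact mul_le_mul_of_nonneg_right hchoose (by positivity)
      have hstep1 : (Nat.card {κ : Composition n // κ.blocks.count k = m} : ℝ) / 2 ^ (n - 1)
          ≤ 2*4^m * ((n:ℝ)*t)^m * (1-t)^(n-m*k) := by
        have e3 : ((n:ℝ)^m * (2^(n-m*k) * (1-t)^(n-m*k))) / 2^(n-1)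
            = 2*4^m * ((n:ℝ)*t)^m * (1-t)^(n-m*k) := by
          calc ((n:ℝ)^m * (2^(n-m*k) * (1-t)^(n-m*k))) / 2^(n-1)
              = (n:ℝ)^m * (1-t)^(n-m*k) * ((2:ℝ)^(n-m*k) / 2^(n-1)) := by ring
            _ = (n:ℝ)^m * (1-t)^(n-m*k) * (2 * ((1:ℝ)/2)^(m*k)) := by rw [hpow2]
            _ = (n:ℝ)^m * (1-t)^(n-m*k) * (2 * ((4:ℝ)^m * t^m)) := by rw [hhalfmk]
            _ = 2*4^m * ((n:ℝ)^m * t^m) * (1-t)^(n-m*k) := by ring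
            _ = 2*4^m * ((n:ℝ)*t)^m * (1-t)^(n-m*k) := by rw [mul_pow]
        rw [div_eq_mul_inv, ← e3, div_eq_mul_inv]
        exact mul_le_mul_of_nonneg_right hnum (by positivity)
      set y := (n:ℝ)*t with hydef
      have hy0 : 0 ≤ y := by positivity
      have hy2logn : 2*Real.log n ≤ y := by
        have hm2 : (2:ℝ) ≤ (m:ℝ)+1 := by linarith
        have h1 : 2*Real.log n ≤ ((m:ℝ)+1)*Real.log n :=
          mul_le_mul_of_nonneg_right hm2 hlogn0.le
        have h2 : ((m:ℝ)+1)*Real.log n ≤ y := by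
          rw [hydef, mul_comm (n:ℝ) t]; exact htn
        exact le_trans h1 h2
      have hexp1 : ((1:ℝ)-t)^(n - m*k) ≤ Real.exp (-(9/10)*y) := by
        have h1 : (1:ℝ)-t ≤ Real.exp (-t) := by
          have := Real.add_one_le_exp (-t); linarith
        have h2 : ((1:ℝ)-t)^(n-m*k) ≤ (Real.exp (-t))^(n-m*k) :=
          pow_le_pow_left₀ h1t0 h1 _
        have h3 : (Real.exp (-t))^(n-m*k) = Real.exp (-(t*((n - m*k : ℕ):ℝ))) := by
          rw [← Real.exp_nat_mul]; congr 1; ring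
        have h4 : Real.exp (-(t*((n - m*k : ℕ):ℝ))) ≤ Real.exp (-(9/10)*y) := by
          apply Real.exp_le_exp.mpr
          rw [hcast_sub, hydef]
          have h5 : (9/10:ℝ)*(n:ℝ) ≤ (n:ℝ) - (m:ℝ)*k := by linarith
          have h6 := mul_le_mul_of_nonneg_left h5 ht0.le
          linarith [h6]
        calc ((1:ℝ)-t)^(n-m*k) ≤ (Real.exp (-t))^(n-m*k) := h2
          _ = Real.exp (-(t*((n - m*k : ℕ):ℝ))) := h3
          _ ≤ Real.exp (-(9/10)*y) := h4
      have hfacpos : (0:ℝ) < (Nat.factorial m : ℝ) := by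
        exact_mod_cast Nat.factorial_pos m
      have hpoly : y^m ≤ (Nat.factorial m : ℝ) * (5/2)^m * Real.exp ((2/5)*y) := by
        have hx0 : (0:ℝ) ≤ (2/5)*y := by positivity
        have hsum := Real.sum_le_exp_of_nonneg hx0 (m+1)
        have hsingle : ((2/5)*y)^m / (Nat.factorial m : ℝ) ≤ Real.exp ((2/5)*y) := by
          refine le_trans ?_ hsum
          exact Finset.single_le_sum (f := fun i => ((2/5)*y)^i / (Nat.factorial i : ℝ))
            (fun i _ => by positivity) (Finset.self_mem_range_succ m)
        rw [div_le_iff₀ hfacpos] at hsingle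
        calc y^m = (5/2)^m * ((2/5)*y)^m := by
              rw [← mul_pow]
              congr 1
              ring
          _ ≤ (5/2)^m * (Real.exp ((2/5)*y) * (Nat.factorial m : ℝ)) :=
              mul_le_mul_of_nonneg_left hsingle (by positivity)
          _ = (Nat.factorial m : ℝ) * (5/2)^m * Real.exp ((2/5)*y) := by ring
      have hexpcomb : Real.exp (-(9/10)*y) * Real.exp ((2/5)*y) = Real.exp (-(1/2)*y) := by
        rw [← Real.exp_add]; congr 1; ring
      have hyfinal : Real.exp (-(1/2)*y) ≤ 1/(n:ℝ) := by
        have h1 : -(1/2)*y ≤ -(Real.log n) := by linarith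
        calc Real.exp (-(1/2)*y) ≤ Real.exp (-(Real.log n)) := Real.exp_le_exp.mpr h1
          _ = 1/(n:ℝ) := by rw [Real.exp_neg, Real.exp_log hn0, one_div]
      have hym : (0:ℝ) ≤ y^m := pow_nonneg hy0 m
      have h24m : (0:ℝ) ≤ 2*(4:ℝ)^m := by positivity
      calc (Nat.card {κ : Composition n // κ.blocks.count k = m} : ℝ) / 2 ^ (n - 1)
          ≤ 2*4^m * ((n:ℝ)*t)^m * (1-t)^(n-m*k) := hstep1
        _ = 2*4^m * y^m * (1-t)^(n-m*k) := by rw [hydef]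
        _ ≤ 2*4^m * y^m * Real.exp (-(9/10)*y) := by
            exact mul_le_mul_of_nonneg_left hexp1 (by
              exact mul_nonneg h24m hym)
        _ ≤ 2*4^m * ((Nat.factorial m : ℝ) * (5/2)^m * Real.exp ((2/5)*y))
              * Real.exp (-(9/10)*y) := by
            refine mul_le_mul_of_nonneg_right ?_ (Real.exp_nonneg _)
            exact mul_le_mul_of_nonneg_left hpoly h24m
        _ = C₁ * (Real.exp (-(9/10)*y) * Real.exp ((2/5)*y)) := by rw [hC₁]; ring
        _ = C₁ * Real.exp (-(1/2)*y) := by rw [hexpcomb]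
        _ ≤ C₁ * (1/(n:ℝ)) := mul_le_mul_of_nonneg_left hyfinal hC₁pos.le
        _ = C₁/n := by ring
    have hsum_le : ∑ k ∈ Finset.Icc 1 K,
        (Nat.card {κ : Composition n // κ.blocks.count k = m} : ℝ) / 2 ^ (n - 1)
        ≤ (K:ℝ) * (C₁/n) := by
      refine le_trans (Finset.sum_le_card_nsmul _ _ _ hterm) ?_
      rw [Nat.card_Icc]
      simp only [Nat.add_sub_cancel]
      rw [nsmul_eq_mul]
    have hnonneg : (0:ℝ) ≤ ∑ k ∈ Finset.Icc 1 K,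
        (Nat.card {κ : Composition n // κ.blocks.count k = m} : ℝ) / 2 ^ (n - 1) :=
      Finset.sum_nonneg (fun k _ => by positivity)
    rw [abs_of_nonneg hnonneg]
    have hK2 : (K:ℝ) ≤ 2*Real.log n := le_trans hKQ hQle
    calc ∑ k ∈ Finset.Icc 1 K,
        (Nat.card {κ : Composition n // κ.blocks.count k = m} : ℝ) / 2 ^ (n - 1)
        ≤ (K:ℝ) * (C₁/n) := hsum_le
      _ ≤ (2*Real.log n) * (C₁/n) := by
          refine mul_le_mul_of_nonneg_right hK2 (by positivity)
      _ = 2*C₁*(Real.log n/n) := by ring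
end
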